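/- arXiv:2107.14504 — 5 statements merged into one kernel-verified Lean document; each statement's English description precedes it below -/
import Mathlib

section
/- Let A be a 2n × 2n antisymmetric matrix with entries A_{ij} = g(x_i) h(x_j) for i < j, where x_1 < x_2 < ... < x_{2n} are real numbers and g, h : ℝ → ℝ are functions. Then the Pfaffian of A equals the alternating product ∏_{i=1}^{n} g(x_{2i-1}) h(x_{2i}). -/
/-- The Pfaffian of a `2n × 2n` real matrix, defined by
`pf(A) = (1/(2^n n!)) ∑_{σ} sgn(σ) ∏_{i=1}^n A_{σ(2i-1), σ(2i)}`. -/
noncomputable def pfaffian {n : ℕ} (A : Matrix (Fin (2*n)) (Fin (2*n)) ℝ) : ℝ :=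
  (1 / ((2:ℝ)^n * n.factorial)) *
    ∑ σ : Equiv.Perm (Fin (2*n)),
      ((Equiv.Perm.sign σ : ℤ) : ℝ) *
        ∏ i : Fin n,
          A (σ ⟨2*(i:ℕ), by have := i.isLt; omega⟩)
            (σ ⟨2*(i:ℕ)+1, by have := i.isLt; omega⟩)

open Equiv Equiv.Perm Finset

namespace PfAux

/-- `stp t x`: skip value `t`. -/
def stp (t x : ℕ) : ℕ := if x < t then x else x + 1

lemma stp_le (t x : ℕ) : stp t x ≤ x + 1 := by unfold stp; split <;> omega

lemma coe_succAbove {m : ℕ} (p : Fin (m+1)) (i : Fin m) :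
    (p.succAbove i : ℕ) = stp (p : ℕ) (i : ℕ) := by
  unfold Fin.succAbove stp
  rcases lt_or_ge (i.castSucc) p with h | h
  · rw [if_pos h, if_pos (by exact_mod_cast h)]; rfl
  · rw [if_neg (not_lt.2 h), if_neg (by exact_mod_cast not_lt.2 h)]; rfl

/-- lift of a permutation fixing 0 -/
def liftP {m : ℕ} (e : Perm (Fin m)) : Perm (Fin (m+1)) :=
  Equiv.Perm.decomposeFin.symm (0, e)

@[simp] lemma liftP_zero {m : ℕ} (e : Perm (Fin m)) : liftP e 0 = 0 :=
  Equiv.Perm.decomposeFin_symm_apply_zero 0 e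

@[simp] lemma liftP_succ {m : ℕ} (e : Perm (Fin m)) (x : Fin m) :
    liftP e x.succ = (e x).succ := by
  rw [liftP, Equiv.Perm.decomposeFin_symm_apply_succ]; simp

@[simp] lemma sign_liftP {m : ℕ} (e : Perm (Fin m)) : Perm.sign (liftP e) = Perm.sign e := by
  rw [liftP, Equiv.Perm.decomposeFin.symm_sign]; simp

/-- the decomposition map -/
def Ψ {m : ℕ} (pe : Fin (m+1) × Perm (Fin m)) : Perm (Fin (m+1)) :=
  (pe.1.cycleRange)⁻¹ * liftP pe.2

@[simp] lemma Ψ_zero {m : ℕ} (p : Fin (m+1)) (e : Perm (Fin m)) : Ψ (p, e) 0 = p := by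
  simp [Ψ, Equiv.Perm.mul_apply, Equiv.Perm.inv_def]

@[simp] lemma Ψ_succ {m : ℕ} (p : Fin (m+1)) (e : Perm (Fin m)) (x : Fin m) :
    Ψ (p, e) x.succ = p.succAbove (e x) := by
  simp [Ψ, Equiv.Perm.mul_apply, Equiv.Perm.inv_def]

lemma sign_Ψ {m : ℕ} (p : Fin (m+1)) (e : Perm (Fin m)) :
    Perm.sign (Ψ (p, e)) = (-1) ^ (p : ℕ) * Perm.sign e := by
  rw [Ψ, map_mul, map_inv, Fin.sign_cycleRange, sign_liftP, ← inv_pow]; norm_num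

lemma Ψ_bijective {m : ℕ} : Function.Bijective (Ψ (m := m)) := by
  rw [Fintype.bijective_iff_injective_and_card]
  constructor
  · rintro ⟨p₁, e₁⟩ ⟨p₂, e₂⟩ hpe
    have h0 : p₁ = p₂ := by
      have := congrArg (fun σ : Perm (Fin (m+1)) => σ 0) hpe
      simpa using this
    subst h0
    have he : e₁ = e₂ := by
      ext x
      have := congrArg (fun σ : Perm (Fin (m+1)) => σ x.succ) hpe
      simp only [Ψ_succ] at this
      have := Fin.succAbove_right_injective (p := p₁) this
      exact congrArg Fin.val this
    simp [he]
  · simp [Fintype.card_perm, Nat.factorial_succ]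

end PfAux

namespace PfAux2
open PfAux

/-- index `j`-th element of the increasing enumeration of the complement of `{p, v}`. -/
def Dz (p v j : ℕ) : ℕ := stp p (stp (if v < p then v else v - 1) j)

lemma Dz_le (p v j : ℕ) : Dz p v j ≤ j + 2 := by
  unfold Dz stp; split_ifs <;> omega

attribute [irreducible] Dz stp

/-- The summand, as a function of the value `v = σ 1`. -/
noncomputable def Tv {n : ℕ} (a b : Fin (2*n+2) → ℝ)
    (A : Matrix (Fin (2*n+2)) (Fin (2*n+2)) ℝ) (p v : Fin (2*n+2)) : ℝ :=
  (-1:ℝ)^(if (v:ℕ) < (p:ℕ) then (v:ℕ) else (v:ℕ)-1) * A p v *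
  ∏ i : Fin n,
    (a ⟨Dz (p:ℕ) (v:ℕ) (2*(i:ℕ)), by
        have := i.isLt; have := Dz_le (p:ℕ) (v:ℕ) (2*(i:ℕ)); omega⟩ *
     b ⟨Dz (p:ℕ) (v:ℕ) (2*(i:ℕ)+1), by
        have := i.isLt; have := Dz_le (p:ℕ) (v:ℕ) (2*(i:ℕ)+1); omega⟩)

lemma cancel_step {n : ℕ} (Q Q' : Fin n → ℝ) (i0 : Fin n)
    (h : ∀ i, i ≠ i0 → Q i = Q' i) (c d e : ℝ)
    (h1 : Q i0 = e * d) (h2 : Q' i0 = e * c) :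
    c * ∏ i, Q i = d * ∏ i, Q' i := by
  rw [← Finset.mul_prod_erase _ Q (Finset.mem_univ i0),
      ← Finset.mul_prod_erase _ Q' (Finset.mem_univ i0), h1, h2,
      Finset.prod_congr rfl (fun i hi => h i (Finset.ne_of_mem_erase hi))]
  ring

lemma cancel_step' {n : ℕ} (Q Q' : Fin n → ℝ) (i0 : Fin n)
    (h : ∀ i, i ≠ i0 → Q i = Q' i) (c d e : ℝ)
    (h1 : Q i0 = d * e) (h2 : Q' i0 = c * e) :
    c * ∏ i, Q i = d * ∏ i, Q' i := by
  rw [← Finset.mul_prod_erase _ Q (Finset.mem_univ i0),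
      ← Finset.mul_prod_erase _ Q' (Finset.mem_univ i0), h1, h2,
      Finset.prod_congr rfl (fun i hi => h i (Finset.ne_of_mem_erase hi))]
  ring

lemma range_pair (g : ℕ → ℝ) (N : ℕ) :
    ∑ j ∈ Finset.range (2*N), g j = ∑ k ∈ Finset.range N, (g (2*k) + g (2*k+1)) := by
  induction N with
  | zero => simp
  | succ N ih =>
    rw [show 2*(N+1) = 2*N+1+1 by ring, Finset.sum_range_succ, Finset.sum_range_succ,
      Finset.sum_range_succ, ih]
    ring

lemma sum_pair {N : ℕ} (f : Fin (2*N) → ℝ) :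
    ∑ v, f v = ∑ k : Fin N, (f ⟨2*(k:ℕ), by have := k.isLt; omega⟩
      + f ⟨2*(k:ℕ)+1, by have := k.isLt; omega⟩) := by
  set g : ℕ → ℝ := fun j => if h : j < 2*N then f ⟨j, h⟩ else 0 with hg
  have h1 : ∑ v, f v = ∑ j ∈ Finset.range (2*N), g j := by
    rw [← Fin.sum_univ_eq_sum_range g (2*N)]
    apply Finset.sum_congr rfl
    intro v _
    rw [hg]
    simp only [Fin.is_lt, dif_pos, Fin.eta]
  have h2 : ∑ k : Fin N, (f ⟨2*(k:ℕ), by have := k.isLt; omega⟩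
      + f ⟨2*(k:ℕ)+1, by have := k.isLt; omega⟩)
      = ∑ k ∈ Finset.range N, (g (2*k) + g (2*k+1)) := by
    rw [← Fin.sum_univ_eq_sum_range (fun k => g (2*k) + g (2*k+1)) N]
    apply Finset.sum_congr rfl
    intro k _
    have hk := k.isLt
    rw [hg]
    simp only []
    rw [dif_pos (by omega : 2*(k:ℕ) < 2*N), dif_pos (by omega : 2*(k:ℕ)+1 < 2*N)]
  rw [h1, h2, range_pair]

lemma Dz_agree_low {p k : ℕ} (hp : p < 2*k) :
    ∀ j, j ≠ 2*k-1 → Dz p (2*k) j = Dz p (2*k+1) j := by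
  intro j hj; unfold Dz stp; split_ifs <;> omega

lemma Dz_agree_high {p k : ℕ} (hp : 2*k+1 < p) :
    ∀ j, j ≠ 2*k → Dz p (2*k) j = Dz p (2*k+1) j := by
  intro j hj; unfold Dz stp; split_ifs <;> omega

lemma fin_eq {M x y : ℕ} (hx : x < M) (h : x = y) (hy : y < M) :
    (⟨x,hx⟩ : Fin M) = ⟨y,hy⟩ := Fin.ext h

lemma bprod_swap {n : ℕ} (a b : Fin (2*n+2) → ℝ) (p : Fin (2*n+2)) (k : ℕ)
    (hk : k < n+1) (hp : (p:ℕ) < 2*k) :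
    b ⟨2*k, by omega⟩ * ∏ i : Fin n,
        (a ⟨Dz (p:ℕ) (2*k) (2*(i:ℕ)), by
            have := i.isLt; have := Dz_le (p:ℕ) (2*k) (2*(i:ℕ)); omega⟩ *
         b ⟨Dz (p:ℕ) (2*k) (2*(i:ℕ)+1), by
            have := i.isLt; have := Dz_le (p:ℕ) (2*k) (2*(i:ℕ)+1); omega⟩)
    = b ⟨2*k+1, by omega⟩ * ∏ i : Fin n,
        (a ⟨Dz (p:ℕ) (2*k+1) (2*(i:ℕ)), by
            have := i.isLt; have := Dz_le (p:ℕ) (2*k+1) (2*(i:ℕ)); omega⟩ *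
         b ⟨Dz (p:ℕ) (2*k+1) (2*(i:ℕ)+1), by
            have := i.isLt; have := Dz_le (p:ℕ) (2*k+1) (2*(i:ℕ)+1); omega⟩) := by
  have hk1 : 1 ≤ k := by omega
  have hn1 : 1 ≤ n := by omega
  refine cancel_step _ _ ⟨k-1, by omega⟩ ?_ _ _
    (a ⟨Dz (p:ℕ) (2*k) (2*(k-1)), by have := Dz_le (p:ℕ) (2*k) (2*(k-1)); omega⟩) ?_ ?_
  · intro i hi
    have hiv : (i:ℕ) ≠ k-1 := fun h => hi (Fin.ext (by simpa using h))
    have e1 : Dz (p:ℕ) (2*k) (2*(i:ℕ)) = Dz (p:ℕ) (2*k+1) (2*(i:ℕ)) :=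
      Dz_agree_low hp _ (by omega)
    have e2 : Dz (p:ℕ) (2*k) (2*(i:ℕ)+1) = Dz (p:ℕ) (2*k+1) (2*(i:ℕ)+1) :=
      Dz_agree_low hp _ (by omega)
    congr 1
    · exact congrArg a (fin_eq _ e1 _)
    · exact congrArg b (fin_eq _ e2 _)
  · show a ⟨Dz (p:ℕ) (2*k) (2*(k-1)), _⟩ * b ⟨Dz (p:ℕ) (2*k) (2*(k-1)+1), _⟩ = _
    congr 1
    exact congrArg b (fin_eq _ (by unfold Dz stp; split_ifs <;> omega) _)
  · show a ⟨Dz (p:ℕ) (2*k+1) (2*(k-1)), _⟩ * b ⟨Dz (p:ℕ) (2*k+1) (2*(k-1)+1), _⟩ = _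
    congr 1
    · exact congrArg a (fin_eq _ (by unfold Dz stp; split_ifs <;> omega) _)
    · exact congrArg b (fin_eq _ (by unfold Dz stp; split_ifs <;> omega) _)

lemma aprod_swap {n : ℕ} (a b : Fin (2*n+2) → ℝ) (p : Fin (2*n+2)) (k : ℕ)
    (hp : 2*k+1 < (p:ℕ)) :
    a ⟨2*k, by have := p.isLt; omega⟩ * ∏ i : Fin n,
        (a ⟨Dz (p:ℕ) (2*k) (2*(i:ℕ)), by
            have := i.isLt; have := Dz_le (p:ℕ) (2*k) (2*(i:ℕ)); omega⟩ *
         b ⟨Dz (p:ℕ) (2*k) (2*(i:ℕ)+1), by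
            have := i.isLt; have := Dz_le (p:ℕ) (2*k) (2*(i:ℕ)+1); omega⟩)
    = a ⟨2*k+1, by have := p.isLt; omega⟩ * ∏ i : Fin n,
        (a ⟨Dz (p:ℕ) (2*k+1) (2*(i:ℕ)), by
            have := i.isLt; have := Dz_le (p:ℕ) (2*k+1) (2*(i:ℕ)); omega⟩ *
         b ⟨Dz (p:ℕ) (2*k+1) (2*(i:ℕ)+1), by
            have := i.isLt; have := Dz_le (p:ℕ) (2*k+1) (2*(i:ℕ)+1); omega⟩) := by
  have hpl := p.isLt
  have hkn : k < n := by omega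
  refine cancel_step' _ _ ⟨k, by omega⟩ ?_ _ _
    (b ⟨Dz (p:ℕ) (2*k) (2*k+1), by have := Dz_le (p:ℕ) (2*k) (2*k+1); omega⟩) ?_ ?_
  · intro i hi
    have hiv : (i:ℕ) ≠ k := fun h => hi (Fin.ext (by simpa using h))
    have e1 : Dz (p:ℕ) (2*k) (2*(i:ℕ)) = Dz (p:ℕ) (2*k+1) (2*(i:ℕ)) :=
      Dz_agree_high hp _ (by omega)
    have e2 : Dz (p:ℕ) (2*k) (2*(i:ℕ)+1) = Dz (p:ℕ) (2*k+1) (2*(i:ℕ)+1) :=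
      Dz_agree_high hp _ (by omega)
    congr 1
    · exact congrArg a (fin_eq _ e1 _)
    · exact congrArg b (fin_eq _ e2 _)
  · show a ⟨Dz (p:ℕ) (2*k) (2*k), _⟩ * b ⟨Dz (p:ℕ) (2*k) (2*k+1), _⟩ = _
    congr 1
    exact congrArg a (fin_eq _ (by unfold Dz stp; split_ifs <;> omega) _)
  · show a ⟨Dz (p:ℕ) (2*k+1) (2*k), _⟩ * b ⟨Dz (p:ℕ) (2*k+1) (2*k+1), _⟩ = _
    congr 1
    · exact congrArg a (fin_eq _ (by unfold Dz stp; split_ifs <;> omega) _)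
    · exact congrArg b (fin_eq _ (Dz_agree_high hp _ (by omega)).symm _)

lemma Tv_mk {n : ℕ} (a b : Fin (2*n+2) → ℝ) (A : Matrix (Fin (2*n+2)) (Fin (2*n+2)) ℝ)
    (p : Fin (2*n+2)) (vn : ℕ) (hv : vn < 2*n+2) :
    Tv a b A p ⟨vn, hv⟩ = (-1:ℝ)^(if vn < (p:ℕ) then vn else vn - 1) * A p ⟨vn, hv⟩ *
      ∏ i : Fin n,
        (a ⟨Dz (p:ℕ) vn (2*(i:ℕ)), by
            have := i.isLt; have := Dz_le (p:ℕ) vn (2*(i:ℕ)); omega⟩ *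
         b ⟨Dz (p:ℕ) vn (2*(i:ℕ)+1), by
            have := i.isLt; have := Dz_le (p:ℕ) vn (2*(i:ℕ)+1); omega⟩) := rfl

lemma A_diag {m : ℕ} (A : Matrix (Fin m) (Fin m) ℝ) (hanti : ∀ i j, A j i = - A i j)
    (v : Fin m) : A v v = 0 := by have := hanti v v; linarith

lemma Tv_diag {n : ℕ} (a b : Fin (2*n+2) → ℝ) (A : Matrix (Fin (2*n+2)) (Fin (2*n+2)) ℝ)
    (hanti : ∀ i j, A j i = - A i j) (p : Fin (2*n+2)) : Tv a b A p p = 0 := by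
  unfold Tv; rw [A_diag A hanti p]; ring

lemma pair_cancel {n : ℕ} (a b : Fin (2*n+2) → ℝ) (A : Matrix (Fin (2*n+2)) (Fin (2*n+2)) ℝ)
    (hanti : ∀ i j, A j i = - A i j)
    (hA : ∀ i j, i < j → A i j = a i * b j)
    (p : Fin (2*n+2)) (k : ℕ) (hk : k < n+1)
    (h1 : (p:ℕ) ≠ 2*k) (h2 : (p:ℕ) ≠ 2*k+1) :
    Tv a b A p ⟨2*k, by omega⟩ + Tv a b A p ⟨2*k+1, by omega⟩ = 0 := by
  have hpl := p.isLt
  rw [Tv_mk, Tv_mk]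
  rcases Nat.lt_or_ge (p:ℕ) (2*k) with hp | hp
  · -- p < 2*k
    rw [if_neg (show ¬(2*k < (p:ℕ)) by omega), if_neg (show ¬(2*k+1 < (p:ℕ)) by omega)]
    have s1 : ((-1:ℝ))^(2*k-1) = -1 := Odd.neg_one_pow ⟨k-1, by omega⟩
    have s2 : ((-1:ℝ))^(2*k+1-1) = 1 := Even.neg_one_pow ⟨k, by omega⟩
    rw [s1, s2]
    rw [hA p ⟨2*k, by omega⟩ (Fin.lt_def.mpr (show (p:ℕ) < 2*k by omega)),
        hA p ⟨2*k+1, by omega⟩ (Fin.lt_def.mpr (show (p:ℕ) < 2*k+1 by omega))]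
    linear_combination (-(a p)) * (bprod_swap a b p k hk hp)
  · -- 2*k+1 < p
    have hp' : 2*k+1 < (p:ℕ) := by omega
    rw [if_pos (show 2*k < (p:ℕ) by omega), if_pos (show 2*k+1 < (p:ℕ) by omega)]
    have s1 : ((-1:ℝ))^(2*k) = 1 := Even.neg_one_pow ⟨k, by omega⟩
    have s2 : ((-1:ℝ))^(2*k+1) = -1 := Odd.neg_one_pow ⟨k, by omega⟩
    rw [s1, s2]
    rw [hanti ⟨2*k, by omega⟩ p, hanti ⟨2*k+1, by omega⟩ p,
        hA ⟨2*k, by omega⟩ p (Fin.lt_def.mpr (show 2*k < (p:ℕ) by omega)),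
        hA ⟨2*k+1, by omega⟩ p (Fin.lt_def.mpr (show 2*k+1 < (p:ℕ) by omega))]
    linear_combination (-(b p)) * (aprod_swap a b p k hp')

lemma pair_survive {n : ℕ} (a b : Fin (2*n+2) → ℝ) (A : Matrix (Fin (2*n+2)) (Fin (2*n+2)) ℝ)
    (hanti : ∀ i j, A j i = - A i j)
    (hA : ∀ i j, i < j → A i j = a i * b j)
    (p : Fin (2*n+2)) (k : ℕ) (hk : k < n+1)
    (hpk : (p:ℕ) = 2*k ∨ (p:ℕ) = 2*k+1) :
    Tv a b A p ⟨2*k, by omega⟩ + Tv a b A p ⟨2*k+1, by omega⟩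
      = (-1:ℝ)^((p:ℕ)) * ∏ i : Fin (n+1),
          (a ⟨2*(i:ℕ), by have := i.isLt; omega⟩
            * b ⟨2*(i:ℕ)+1, by have := i.isLt; omega⟩) := by
  have hpl := p.isLt
  have hprodfull := Fin.prod_univ_succAbove (f := fun i : Fin (n+1) =>
    a ⟨2*(i:ℕ), by have := i.isLt; omega⟩ * b ⟨2*(i:ℕ)+1, by have := i.isLt; omega⟩) ⟨k, hk⟩
  have hv : ∀ i : Fin n, (((⟨k,hk⟩ : Fin (n+1)).succAbove i) : ℕ) = stp k (i:ℕ) :=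
    fun i => coe_succAbove ⟨k,hk⟩ i
  rcases hpk with hp | hp
  · -- p = 2k (even), survivor is v = 2k+1
    have e0 : (⟨2*k, by omega⟩ : Fin (2*n+2)) = p := Fin.ext (show 2*k = (p:ℕ) by omega)
    have t0 : Tv a b A p ⟨2*k, by omega⟩ = 0 := by
      rw [e0]; exact Tv_diag a b A hanti p
    rw [t0, zero_add, Tv_mk, if_neg (show ¬(2*k+1 < (p:ℕ)) by omega)]
    have s2 : ((-1:ℝ))^(2*k+1-1) = 1 := Even.neg_one_pow ⟨k, by omega⟩
    have sp : ((-1:ℝ))^((p:ℕ)) = 1 := Even.neg_one_pow ⟨k, by omega⟩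
    rw [s2, sp, hA p ⟨2*k+1, by omega⟩ (Fin.lt_def.mpr (show (p:ℕ) < 2*k+1 by omega))]
    have key : (∏ i : Fin (n+1),
          (a ⟨2*(i:ℕ), by have := i.isLt; omega⟩
            * b ⟨2*(i:ℕ)+1, by have := i.isLt; omega⟩))
        = (a p * b ⟨2*k+1, by omega⟩) * ∏ i : Fin n,
          (a ⟨Dz (p:ℕ) (2*k+1) (2*(i:ℕ)), by
              have := i.isLt; have := Dz_le (p:ℕ) (2*k+1) (2*(i:ℕ)); omega⟩ *
           b ⟨Dz (p:ℕ) (2*k+1) (2*(i:ℕ)+1), by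
              have := i.isLt; have := Dz_le (p:ℕ) (2*k+1) (2*(i:ℕ)+1); omega⟩) := by
      rw [hprodfull]
      congr 1
      · congr 1
        exact congrArg a (Fin.ext (show 2*k = (p:ℕ) by omega))
      · apply Finset.prod_congr rfl; intro i _
        have hil := i.isLt
        congr 1
        · exact congrArg a (Fin.ext (show 2*(((⟨k,hk⟩ : Fin (n+1)).succAbove i):ℕ)
            = Dz (p:ℕ) (2*k+1) (2*(i:ℕ)) by rw [hv i]; unfold Dz stp; split_ifs <;> omega))
        · exact congrArg b (Fin.ext (show 2*(((⟨k,hk⟩ : Fin (n+1)).succAbove i):ℕ)+1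
            = Dz (p:ℕ) (2*k+1) (2*(i:ℕ)+1) by rw [hv i]; unfold Dz stp; split_ifs <;> omega))
    rw [key]; ring
  · -- p = 2k+1 (odd), survivor is v = 2k
    have e1 : (⟨2*k+1, by omega⟩ : Fin (2*n+2)) = p := Fin.ext (show 2*k+1 = (p:ℕ) by omega)
    have t1 : Tv a b A p ⟨2*k+1, by omega⟩ = 0 := by
      rw [e1]; exact Tv_diag a b A hanti p
    rw [t1, add_zero, Tv_mk, if_pos (show 2*k < (p:ℕ) by omega)]
    have s1 : ((-1:ℝ))^(2*k) = 1 := Even.neg_one_pow ⟨k, by omega⟩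
    have sp : ((-1:ℝ))^((p:ℕ)) = -1 := Odd.neg_one_pow ⟨k, by omega⟩
    rw [s1, sp, hanti ⟨2*k, by omega⟩ p,
        hA ⟨2*k, by omega⟩ p (Fin.lt_def.mpr (show 2*k < (p:ℕ) by omega))]
    have key : (∏ i : Fin (n+1),
          (a ⟨2*(i:ℕ), by have := i.isLt; omega⟩
            * b ⟨2*(i:ℕ)+1, by have := i.isLt; omega⟩))
        = (a ⟨2*k, by omega⟩ * b p) * ∏ i : Fin n,
          (a ⟨Dz (p:ℕ) (2*k) (2*(i:ℕ)), by
              have := i.isLt; have := Dz_le (p:ℕ) (2*k) (2*(i:ℕ)); omega⟩ *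
           b ⟨Dz (p:ℕ) (2*k) (2*(i:ℕ)+1), by
              have := i.isLt; have := Dz_le (p:ℕ) (2*k) (2*(i:ℕ)+1); omega⟩) := by
      rw [hprodfull]
      congr 1
      · congr 1
        exact congrArg b (Fin.ext (show 2*k+1 = (p:ℕ) by omega))
      · apply Finset.prod_congr rfl; intro i _
        have hil := i.isLt
        congr 1
        · exact congrArg a (Fin.ext (show 2*(((⟨k,hk⟩ : Fin (n+1)).succAbove i):ℕ)
            = Dz (p:ℕ) (2*k) (2*(i:ℕ)) by rw [hv i]; unfold Dz stp; split_ifs <;> omega))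
        · exact congrArg b (Fin.ext (show 2*(((⟨k,hk⟩ : Fin (n+1)).succAbove i):ℕ)+1
            = Dz (p:ℕ) (2*k) (2*(i:ℕ)+1) by rw [hv i]; unfold Dz stp; split_ifs <;> omega))
    rw [key]; ring

lemma succAbove_succAbove_coe {m : ℕ} (p : Fin (m+2)) (q : Fin (m+1)) (j : Fin m) :
    ((p.succAbove (q.succAbove j)) : ℕ) = Dz (p:ℕ) ((p.succAbove q):ℕ) (j:ℕ) := by
  have h1 := coe_succAbove p (q.succAbove j)
  have h2 := coe_succAbove q j
  have h3 := coe_succAbove p q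
  have hq := q.isLt; have hp := p.isLt; have hj := j.isLt
  rw [h1, h2, h3]
  unfold Dz stp
  split_ifs <;> omega

lemma qof_succAbove {m : ℕ} (p : Fin (m+2)) (q : Fin (m+1)) :
    (if ((p.succAbove q):ℕ) < (p:ℕ) then ((p.succAbove q):ℕ) else ((p.succAbove q):ℕ) - 1)
      = (q:ℕ) := by
  have h3 := coe_succAbove p q
  have hq := q.isLt; have hp := p.isLt
  rw [h3]; unfold stp; split_ifs <;> omega

lemma innerSum {n : ℕ} (a b : Fin (2*n+2) → ℝ) (A : Matrix (Fin (2*n+2)) (Fin (2*n+2)) ℝ)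
    (hanti : ∀ i j, A j i = - A i j)
    (hA : ∀ i j, i < j → A i j = a i * b j)
    (p : Fin (2*n+2)) :
    ∑ q : Fin (2*n+1), ((-1:ℝ)^((q:ℕ)) * A p (p.succAbove q) *
      ∏ i : Fin n,
        (a (p.succAbove (q.succAbove ⟨2*(i:ℕ), by have := i.isLt; omega⟩)) *
         b (p.succAbove (q.succAbove ⟨2*(i:ℕ)+1, by have := i.isLt; omega⟩))))
    = (-1:ℝ)^((p:ℕ)) * ∏ i : Fin (n+1),
        (a ⟨2*(i:ℕ), by have := i.isLt; omega⟩
          * b ⟨2*(i:ℕ)+1, by have := i.isLt; omega⟩) := by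
  have hstep : ∀ q : Fin (2*n+1),
      ((-1:ℝ)^((q:ℕ)) * A p (p.succAbove q) *
      ∏ i : Fin n,
        (a (p.succAbove (q.succAbove ⟨2*(i:ℕ), by have := i.isLt; omega⟩)) *
         b (p.succAbove (q.succAbove ⟨2*(i:ℕ)+1, by have := i.isLt; omega⟩))))
      = Tv a b A p (p.succAbove q) := by
    intro q
    unfold Tv
    rw [qof_succAbove p q]
    congr 1
    apply Finset.prod_congr rfl; intro i _
    congr 1
    · exact congrArg a (Fin.ext (succAbove_succAbove_coe p q ⟨2*(i:ℕ), by have := i.isLt; omega⟩))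
    · exact congrArg b (Fin.ext (succAbove_succAbove_coe p q ⟨2*(i:ℕ)+1, by have := i.isLt; omega⟩))
  rw [Finset.sum_congr rfl (fun q _ => hstep q)]
  have hsum := Fin.sum_univ_succAbove (fun v => Tv a b A p v) p
  rw [Tv_diag a b A hanti p, zero_add] at hsum
  have hsp : (∑ i : Fin (2*n+1+1), Tv a b A p i)
      = ∑ k : Fin (n+1), (Tv a b A p ⟨2*(k:ℕ), by have := k.isLt; omega⟩
        + Tv a b A p ⟨2*(k:ℕ)+1, by have := k.isLt; omega⟩) :=
    sum_pair (N := n+1) (fun v => Tv a b A p v)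
  rw [← hsum, hsp]
  have hps : (p:ℕ)/2 < n+1 := by have := p.isLt; omega
  rw [Finset.sum_eq_single_of_mem (⟨(p:ℕ)/2, hps⟩ : Fin (n+1)) (Finset.mem_univ _)
    (fun k _ hkne => pair_cancel a b A hanti hA p (k:ℕ) k.isLt
      (fun h => hkne (Fin.ext (show (k:ℕ) = (p:ℕ)/2 by omega)))
      (fun h => hkne (Fin.ext (show (k:ℕ) = (p:ℕ)/2 by omega))))]
  exact pair_survive a b A hanti hA p ((p:ℕ)/2) hps (by omega)

lemma sgnR_Ψ {m : ℕ} (p : Fin (m+1)) (e : Perm (Fin m)) :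
    ((Perm.sign (Ψ (p, e)) : ℤ) : ℝ) = (-1:ℝ)^((p:ℕ)) * ((Perm.sign e : ℤ) : ℝ) := by
  rw [sign_Ψ]
  push_cast
  ring

lemma key (n : ℕ) : ∀ (a b : Fin (2*n) → ℝ) (A : Matrix (Fin (2*n)) (Fin (2*n)) ℝ),
    (∀ i j, A j i = - A i j) → (∀ i j, i < j → A i j = a i * b j) →
    (∑ σ : Perm (Fin (2*n)), ((Perm.sign σ : ℤ) : ℝ) *
        ∏ i : Fin n, A (σ ⟨2*(i:ℕ), by have := i.isLt; omega⟩)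
          (σ ⟨2*(i:ℕ)+1, by have := i.isLt; omega⟩))
      = 2^n * (n.factorial : ℝ) * ∏ i : Fin n,
          (a ⟨2*(i:ℕ), by have := i.isLt; omega⟩
            * b ⟨2*(i:ℕ)+1, by have := i.isLt; omega⟩) := by
  induction n with
  | zero => intro a b A _ _; simp
  | succ n ih =>
    intro a b A hanti hA
    have hemb : ∀ (p : Fin (2*n+1+1)) (q : Fin (2*n+1)),
        StrictMono (fun y : Fin (2*n) => p.succAbove (q.succAbove y)) :=
      fun p q => (Fin.strictMono_succAbove p).comp (Fin.strictMono_succAbove q)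
    -- inner τ-sum via induction hypothesis
    have inner1 : ∀ (p : Fin (2*n+1+1)) (q : Fin (2*n+1)),
        (∑ τ : Perm (Fin (2*n)), ((Perm.sign τ : ℤ) : ℝ) *
          ∏ i : Fin n,
            A (p.succAbove (q.succAbove (τ ⟨2*(i:ℕ), by have := i.isLt; omega⟩)))
              (p.succAbove (q.succAbove (τ ⟨2*(i:ℕ)+1, by have := i.isLt; omega⟩))))
        = 2^n * (n.factorial : ℝ) * ∏ i : Fin n,
            (a (p.succAbove (q.succAbove ⟨2*(i:ℕ), by have := i.isLt; omega⟩)) *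
             b (p.succAbove (q.succAbove ⟨2*(i:ℕ)+1, by have := i.isLt; omega⟩))) := by
      intro p q
      exact ih (fun y => a (p.succAbove (q.succAbove y)))
        (fun y => b (p.succAbove (q.succAbove y)))
        (Matrix.of fun k l => A (p.succAbove (q.succAbove k)) (p.succAbove (q.succAbove l)))
        (fun i j => hanti _ _) (fun i j hij => hA _ _ (hemb p q hij))
    -- double decomposition of the permutation sum
    have hbij1 : ∀ (G : Perm (Fin (2*n+1+1)) → ℝ), ∑ σ, G σ
        = ∑ p : Fin (2*n+1+1), ∑ e : Perm (Fin (2*n+1)), G (Ψ (p, e)) := by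
      intro G
      exact ((Fintype.sum_bijective Ψ Ψ_bijective (fun pe => G (Ψ pe)) G
        (fun pe => rfl)).symm).trans (Fintype.sum_prod_type (f := fun pe => G (Ψ pe)))
    have hbij2 : ∀ (G : Perm (Fin (2*n+1)) → ℝ), ∑ e, G e
        = ∑ q : Fin (2*n+1), ∑ τ : Perm (Fin (2*n)), G (Ψ (q, τ)) := by
      intro G
      exact ((Fintype.sum_bijective Ψ Ψ_bijective (fun qt => G (Ψ qt)) G
        (fun qt => rfl)).symm).trans (Fintype.sum_prod_type (f := fun qt => G (Ψ qt)))
    -- per-term computation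
    have hAi : ∀ (p : Fin (2*n+1+1)) (q : Fin (2*n+1)) (τ : Perm (Fin (2*n))) (i : Fin n),
        A (Ψ (p, Ψ (q, τ)) ⟨2*((i.succ : Fin (n+1)):ℕ), by
              have := (i.succ : Fin (n+1)).isLt; omega⟩)
          (Ψ (p, Ψ (q, τ)) ⟨2*((i.succ : Fin (n+1)):ℕ)+1, by
              have := (i.succ : Fin (n+1)).isLt; omega⟩)
        = A (p.succAbove (q.succAbove (τ ⟨2*(i:ℕ), by have := i.isLt; omega⟩)))
            (p.succAbove (q.succAbove (τ ⟨2*(i:ℕ)+1, by have := i.isLt; omega⟩))) := by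
      intro p q τ i
      have es1 : (⟨2*((i.succ : Fin (n+1)):ℕ), by
            have := (i.succ : Fin (n+1)).isLt; omega⟩ : Fin (2*n+1+1))
          = ((⟨2*(i:ℕ), by have := i.isLt; omega⟩ : Fin (2*n)).succ.succ) :=
        Fin.ext (show 2*((i:ℕ)+1) = 2*(i:ℕ)+1+1 by omega)
      have es2 : (⟨2*((i.succ : Fin (n+1)):ℕ)+1, by
            have := (i.succ : Fin (n+1)).isLt; omega⟩ : Fin (2*n+1+1))
          = ((⟨2*(i:ℕ)+1, by have := i.isLt; omega⟩ : Fin (2*n)).succ.succ) :=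
        Fin.ext (show 2*((i:ℕ)+1)+1 = 2*(i:ℕ)+1+1+1 by omega)
      rw [es1, es2, Ψ_succ, Ψ_succ, Ψ_succ, Ψ_succ]
    have hterm : ∀ (p : Fin (2*n+1+1)) (q : Fin (2*n+1)) (τ : Perm (Fin (2*n))),
        ((Perm.sign (Ψ (p, Ψ (q, τ))) : ℤ) : ℝ) *
          ∏ i : Fin (n+1),
            A (Ψ (p, Ψ (q, τ)) ⟨2*(i:ℕ), by have := i.isLt; omega⟩)
              (Ψ (p, Ψ (q, τ)) ⟨2*(i:ℕ)+1, by have := i.isLt; omega⟩)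
        = ((-1:ℝ)^((p:ℕ)) * ((-1:ℝ)^((q:ℕ)) * A p (p.succAbove q))) *
            (((Perm.sign τ : ℤ) : ℝ) * ∏ i : Fin n,
              A (p.succAbove (q.succAbove (τ ⟨2*(i:ℕ), by have := i.isLt; omega⟩)))
                (p.succAbove (q.succAbove (τ ⟨2*(i:ℕ)+1, by have := i.isLt; omega⟩)))) := by
      intro p q τ
      rw [sgnR_Ψ, sgnR_Ψ, Fin.prod_univ_succ]
      have e00 : (⟨2*((0 : Fin (n+1)):ℕ), by norm_num⟩ : Fin (2*n+1+1)) = 0 :=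
        Fin.ext (by simp)
      have e01 : (⟨2*((0 : Fin (n+1)):ℕ)+1, by norm_num⟩ : Fin (2*n+1+1))
          = (0 : Fin (2*n+1)).succ := Fin.ext (by simp)
      rw [e00, e01, Ψ_succ, Ψ_zero, Ψ_zero,
        Finset.prod_congr rfl (fun i (_ : i ∈ Finset.univ) => hAi p q τ i)]
      ring
    show (∑ σ : Perm (Fin (2*n+1+1)), ((Perm.sign σ : ℤ) : ℝ) *
        ∏ i : Fin (n+1), A (σ ⟨2*(i:ℕ), by have := i.isLt; omega⟩)
          (σ ⟨2*(i:ℕ)+1, by have := i.isLt; omega⟩)) = _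
    rw [hbij1]
    simp only [hbij2]
    simp only [hterm]
    simp only [← Finset.mul_sum]
    simp only [inner1]
    have hre : ∀ (p : Fin (2*n+1+1)) (q : Fin (2*n+1)),
        ((-1:ℝ)^((p:ℕ)) * ((-1:ℝ)^((q:ℕ)) * A p (p.succAbove q))) *
          (2^n * (n.factorial : ℝ) * ∏ i : Fin n,
            (a (p.succAbove (q.succAbove ⟨2*(i:ℕ), by have := i.isLt; omega⟩)) *
             b (p.succAbove (q.succAbove ⟨2*(i:ℕ)+1, by have := i.isLt; omega⟩))))
        = ((-1:ℝ)^((p:ℕ)) * (2^n * (n.factorial : ℝ))) *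
            ((-1:ℝ)^((q:ℕ)) * A p (p.succAbove q) *
              ∏ i : Fin n,
                (a (p.succAbove (q.succAbove ⟨2*(i:ℕ), by have := i.isLt; omega⟩)) *
                 b (p.succAbove (q.succAbove ⟨2*(i:ℕ)+1, by have := i.isLt; omega⟩)))) :=
      fun p q => by ring
    simp only [hre]
    simp only [← Finset.mul_sum]
    simp only [innerSum a b A hanti hA]
    have hpp : ∀ p : Fin (2*n+1+1),
        ((-1:ℝ)^((p:ℕ)) * (2^n * (n.factorial : ℝ))) *
          ((-1:ℝ)^((p:ℕ)) * ∏ i : Fin (n+1),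
            (a ⟨2*(i:ℕ), by have := i.isLt; omega⟩
              * b ⟨2*(i:ℕ)+1, by have := i.isLt; omega⟩))
        = (2^n * (n.factorial : ℝ)) * ∏ i : Fin (n+1),
            (a ⟨2*(i:ℕ), by have := i.isLt; omega⟩
              * b ⟨2*(i:ℕ)+1, by have := i.isLt; omega⟩) := by
      intro p
      have h1 : ((-1:ℝ))^((p:ℕ)) * ((-1:ℝ))^((p:ℕ)) = 1 := by
        rw [← pow_add]; exact Even.neg_one_pow ⟨(p:ℕ), rfl⟩
      linear_combination ((2:ℝ)^n * (n.factorial : ℝ) * ∏ i : Fin (n+1),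
        (a ⟨2*(i:ℕ), by have := i.isLt; omega⟩
          * b ⟨2*(i:ℕ)+1, by have := i.isLt; omega⟩)) * h1
    simp only [hpp]
    rw [Finset.sum_const, Finset.card_univ, Fintype.card_fin, nsmul_eq_mul]
    rw [Nat.factorial_succ]
    push_cast
    ring

end PfAux2

/-- if `A` is the `2n × 2n` antisymmetric matrix with entries
`A i j = g(x i) * h(x j)` for `i < j`, where `x_1 < ⋯ < x_{2n}`, then
`pf(A) = ∏_{i=1}^n g(x_{2i-1}) h(x_{2i})`. -/
theorem pfaffian_of_alternating_product_kernel (n : ℕ) (x : Fin (2*n) → ℝ)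
    (hx : StrictMono x) (g h : ℝ → ℝ) (A : Matrix (Fin (2*n)) (Fin (2*n)) ℝ)
    (hanti : ∀ i j, A j i = - A i j)
    (hA : ∀ i j : Fin (2*n), i < j → A i j = g (x i) * h (x j)) :
    pfaffian A
      = ∏ i : Fin n,
          g (x ⟨2*(i:ℕ), by have := i.isLt; omega⟩)
            * h (x ⟨2*(i:ℕ)+1, by have := i.isLt; omega⟩) := by
  have h2 : (2:ℝ)^n * (n.factorial : ℝ) ≠ 0 := by positivity
  rw [pfaffian, PfAux2.key n (fun i => g (x i)) (fun i => h (x i)) A hanti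
    (fun i j hij => hA i j hij), one_div, inv_mul_cancel_left₀ h2]
end

section
/- Let (S_n)_{n≥0} be a random walk started at 0 whose i.i.d. increments have a symmetric probability density ρ on ℝ, and let τ_{0+} = inf{n ≥ 1 : S_n > 0}. Then for every β ∈ [0,1], the expectation E[β^{τ_{0+}}] equals 1 − √(1−β). (Sparre Andersen's formula.) -/
open Classical
open MeasureTheory ProbabilityTheory
open scoped ENNReal

set_option maxHeartbeats 1000000


section Aux
variable (ρ : ℝ → ℝ)

/-- the increment law -/
noncomputable def saNu : Measure ℝ := volume.withDensity (fun x => ENNReal.ofReal (ρ x))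

lemma saNu_prob (hρpos : ∀ x, 0 ≤ ρ x) (hρint : ∫ x, ρ x = 1) :
    IsProbabilityMeasure (saNu ρ) := by
  have hint : Integrable ρ := by
    by_contra h
    rw [integral_undef h] at hρint
    norm_num at hρint
  constructor
  rw [saNu, withDensity_apply _ MeasurableSet.univ, setLIntegral_univ,
    ← ofReal_integral_eq_lintegral_ofReal hint (Filter.Eventually.of_forall hρpos), hρint]
  simp

lemma saNu_singleton (x : ℝ) : saNu ρ {x} = 0 :=
  withDensity_absolutelyContinuous _ _ (measure_singleton x)

lemma saNu_neg (hρsymm : ∀ x, ρ (-x) = ρ x) :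
    Measure.map (fun x : ℝ => -x) (saNu ρ) = saNu ρ := by
  ext s hs
  rw [Measure.map_apply measurable_neg hs, saNu, withDensity_apply _ (measurable_neg hs),
    withDensity_apply _ hs]
  have : MeasurePreserving (fun x : ℝ => -x) volume volume :=
    Measure.measurePreserving_neg _
  have hemb : MeasurableEmbedding (fun x : ℝ => -x) :=
    (Homeomorph.neg ℝ).measurableEmbedding
  calc ∫⁻ x in (fun x : ℝ => -x) ⁻¹' s, ENNReal.ofReal (ρ x)
      = ∫⁻ x in (fun x : ℝ => -x) ⁻¹' s, (fun y => ENNReal.ofReal (ρ (-y))) (-x) := by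
        simp
    _ = ∫⁻ y in (fun x : ℝ => -x) '' ((fun x : ℝ => -x) ⁻¹' s), (fun y => ENNReal.ofReal (ρ (-y))) y :=
        this.setLIntegral_comp_emb hemb (fun y => ENNReal.ofReal (ρ (-y))) _
    _ = ∫⁻ y in s, ENNReal.ofReal (ρ y) := by
        rw [Set.image_preimage_eq s (neg_surjective)]
        simp [hρsymm]
end Aux

/-- partial sum of the first `j` coordinates -/
noncomputable def saPsum {k : ℕ} (x : Fin k → ℝ) (j : ℕ) : ℝ :=
  ∑ i : Fin k, if (i : ℕ) < j then x i else 0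

lemma saPsum_eq {k : ℕ} (g : ℕ → ℝ) {j : ℕ} (hj : j ≤ k) :
    saPsum (fun i : Fin k => g (i : ℕ)) j = ∑ i ∈ Finset.range j, g i := by
  rw [saPsum, Fin.sum_univ_eq_sum_range (fun i => if i < j then g i else 0) k,
    ← Finset.sum_filter]
  congr 1
  ext i
  simp only [Finset.mem_filter, Finset.mem_range]
  omega

lemma saPsum_measurable {k : ℕ} (j : ℕ) : Measurable (fun x : Fin k → ℝ => saPsum x j) := by
  unfold saPsum
  exact Finset.measurable_sum _ fun i _ => by
    by_cases h : (i : ℕ) < j <;> simp [h, measurable_pi_apply]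

lemma saPsum_cons {k : ℕ} (x0 : ℝ) (r : Fin k → ℝ) {j : ℕ} (hj : 1 ≤ j) :
    saPsum (Fin.cons x0 r) j = x0 + ∑ i : Fin k, if (i : ℕ) + 1 < j then r i else 0 := by
  rw [saPsum, Fin.sum_univ_succ]
  simp only [Fin.cons_zero, Fin.cons_succ, Fin.val_zero, Fin.val_succ]
  rw [if_pos (by omega)]

/-- joint law of finitely many of the increments is the product measure -/
lemma sa_joint_law {Ω : Type*} [MeasurableSpace Ω] (μ : Measure Ω) (ν : Measure ℝ)
    [IsProbabilityMeasure ν]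
    (Y : ℕ → Ω → ℝ) (hYm : ∀ n, Measurable (Y n))
    (hYindep : iIndepFun Y μ)
    (hYlaw : ∀ n, Measure.map (Y n) μ = ν)
    {m : ℕ} (ι : Fin m → ℕ) (hι : Function.Injective ι) :
    Measure.map (fun ω (i : Fin m) => Y (ι i) ω) μ = Measure.pi (fun _ => ν) := by
  have hTm : Measurable (fun ω (i : Fin m) => Y (ι i) ω) :=
    measurable_pi_lambda _ (fun i => hYm (ι i))
  refine (Measure.pi_eq (μ := fun _ : Fin m => ν) (fun s hs => ?_)).symm
  rw [Measure.map_apply hTm (MeasurableSet.univ_pi hs)]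
  set sets : ℕ → Set ℝ := fun j => ⋂ (i : Fin m) (_ : ι i = j), s i with hsets
  have hsm : ∀ j, MeasurableSet (sets j) := fun j =>
    MeasurableSet.iInter fun i => MeasurableSet.iInter fun _ => hs i
  have hkey : ∀ i, sets (ι i) = s i := by
    intro i
    apply Set.Subset.antisymm
    · intro x hx
      exact Set.mem_iInter.1 (Set.mem_iInter.1 hx i) rfl
    · intro x hx
      refine Set.mem_iInter.2 fun i' => Set.mem_iInter.2 fun h => ?_
      rwa [hι h]
  have hpre : (fun ω (i : Fin m) => Y (ι i) ω) ⁻¹' Set.pi Set.univ s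
      = ⋂ j ∈ Finset.image ι Finset.univ, Y j ⁻¹' sets j := by
    ext ω
    simp only [Set.mem_preimage, Set.mem_univ_pi, Set.mem_iInter, Finset.mem_image,
      Finset.mem_univ, true_and]
    constructor
    · rintro h j ⟨i, rfl⟩
      rw [hkey]
      exact h i
    · intro h i
      have := h (ι i) ⟨i, rfl⟩
      rwa [hkey] at this
  rw [hpre, hYindep.measure_inter_preimage_eq_mul _ (fun j _ => hsm j),
    Finset.prod_image (fun a _ b _ h => hι h)]
  exact Finset.prod_congr rfl fun i _ => by
    rw [hkey, ← hYlaw (ι i), Measure.map_apply (hYm (ι i)) (hs i)]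

lemma sa_null_slice {E : Type*} [MeasurableSpace E] (ν₁ : Measure ℝ) [IsProbabilityMeasure ν₁]
    (h1 : ∀ x : ℝ, ν₁ {x} = 0) (ν₂ : Measure E) [IsProbabilityMeasure ν₂]
    (g : E → ℝ) (hg : Measurable g) :
    (ν₁.prod ν₂) {p : ℝ × E | p.1 + g p.2 = 0} = 0 := by
  have hms : MeasurableSet {p : ℝ × E | p.1 + g p.2 = 0} :=
    measurableSet_eq_fun (measurable_fst.add (hg.comp measurable_snd)) measurable_const
  rw [Measure.prod_apply_symm hms]
  have hslice : ∀ y : E, (fun x : ℝ => (x, y)) ⁻¹' {p : ℝ × E | p.1 + g p.2 = 0} = {-(g y)} := by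
    intro y
    ext x
    simp only [Set.mem_preimage, Set.mem_setOf_eq, Set.mem_singleton_iff]
    constructor <;> intro h <;> linarith
  simp [hslice, h1]

lemma sa_pi_psum_null (ν : Measure ℝ) [IsProbabilityMeasure ν] (hν : ∀ x : ℝ, ν {x} = 0)
    (k j : ℕ) (hj : 1 ≤ j) :
    Measure.pi (fun _ : Fin (k+1) => ν) {x | saPsum x j = 0} = 0 := by
  have hmp := measurePreserving_piFinSuccAbove (fun _ : Fin (k+1) => ν) 0
  set e := MeasurableEquiv.piFinSuccAbove (fun _ : Fin (k+1) => ℝ) 0 with he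
  set g : (Fin k → ℝ) → ℝ := fun r => ∑ i : Fin k, if (i : ℕ) + 1 < j then r i else 0 with hg
  have hgm : Measurable g :=
    Finset.measurable_sum _ fun i _ => by
      by_cases h : (i : ℕ) + 1 < j <;> simp [h, measurable_pi_apply]
  have hA : {x : Fin (k+1) → ℝ | saPsum x j = 0}
      = e ⁻¹' {p : ℝ × (Fin k → ℝ) | p.1 + g p.2 = 0} := by
    ext x
    have hx : saPsum x j = x 0 + g (fun i => x i.succ) := by
      conv_lhs => rw [← Fin.cons_self_tail x]
      rw [saPsum_cons _ _ hj]
      rfl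
    simp only [Set.mem_preimage, Set.mem_setOf_eq, he, MeasurableEquiv.piFinSuccAbove_apply,
      Fin.succAbove_zero, hx]
    rfl
  have hBm : MeasurableSet {p : ℝ × (Fin k → ℝ) | p.1 + g p.2 = 0} :=
    measurableSet_eq_fun (measurable_fst.add (hgm.comp measurable_snd)) measurable_const
  rw [hA, ← Measure.map_apply e.measurable hBm, hmp.map_eq]
  exact sa_null_slice ν hν _ g hgm
section P4
open scoped ENNReal

variable {Ω : Type*} [MeasurableSpace Ω]

def saG (X : ℕ → Ω → ℝ) (m : ℕ) : Set Ω :=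
  {ω | ∀ j ∈ Finset.Icc 1 m, ∑ i ∈ Finset.range j, X i ω ≤ 0}

def saE (X : ℕ → Ω → ℝ) (k : ℕ) : Set Ω :=
  {ω | ∀ j < k, ∑ i ∈ Finset.Ico j k, X i ω < 0}

def saF (X : ℕ → Ω → ℝ) (k m : ℕ) : Set Ω :=
  {ω | ∀ j ∈ Finset.Icc 1 m, 0 ≤ ∑ i ∈ Finset.Ico k (k + j), X i ω}

def saPle (k : ℕ) : Set (Fin k → ℝ) := {x | ∀ j ∈ Finset.Icc 1 k, saPsum x j ≤ 0}
def saPge (k : ℕ) : Set (Fin k → ℝ) := {x | ∀ j ∈ Finset.Icc 1 k, 0 ≤ saPsum x j}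
def saPgt (k : ℕ) : Set (Fin k → ℝ) := {x | ∀ j ∈ Finset.Icc 1 k, 0 < saPsum x j}

lemma saPle_meas (k : ℕ) : MeasurableSet (saPle k) := by
  have h : saPle k = ⋂ j ∈ Finset.Icc 1 k, {x | saPsum x j ≤ 0} := by
    ext x; simp [saPle]
  rw [h]
  exact MeasurableSet.biInter (Finset.countable_toSet _)
    fun j _ => measurableSet_le (saPsum_measurable j) measurable_const

lemma saPge_meas (k : ℕ) : MeasurableSet (saPge k) := by
  have h : saPge k = ⋂ j ∈ Finset.Icc 1 k, {x | 0 ≤ saPsum x j} := by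
    ext x; simp [saPge]
  rw [h]
  exact MeasurableSet.biInter (Finset.countable_toSet _)
    fun j _ => measurableSet_le measurable_const (saPsum_measurable j)

lemma saPgt_meas (k : ℕ) : MeasurableSet (saPgt k) := by
  have h : saPgt k = ⋂ j ∈ Finset.Icc 1 k, {x | 0 < saPsum x j} := by
    ext x; simp [saPgt]
  rw [h]
  exact MeasurableSet.biInter (Finset.countable_toSet _)
    fun j _ => measurableSet_lt measurable_const (saPsum_measurable j)

lemma sa_rev_sum (f : ℕ → ℝ) {j k : ℕ} (hjk : j ≤ k) :
    ∑ i ∈ Finset.range j, f (k - 1 - i) = ∑ i ∈ Finset.Ico (k - j) k, f i := by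
  refine Finset.sum_nbij' (fun a => k - 1 - a) (fun b => k - 1 - b) ?_ ?_ ?_ ?_ ?_
  · intro a ha
    simp only [Finset.mem_range] at ha
    simp only [Finset.mem_Ico]
    omega
  · intro b hb
    simp only [Finset.mem_Ico] at hb
    simp only [Finset.mem_range]
    omega
  · intro a ha
    simp only [Finset.mem_range] at ha
    show k - 1 - (k - 1 - a) = a
    omega
  · intro b hb
    simp only [Finset.mem_Ico] at hb
    show k - 1 - (k - 1 - b) = b
    omega
  · intro a _
    rfl

lemma saG_eq (X : ℕ → Ω → ℝ) (m : ℕ) :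
    saG X m = (fun ω (i : Fin m) => X (i : ℕ) ω) ⁻¹' saPle m := by
  ext ω
  simp only [saG, saPle, Set.mem_preimage, Set.mem_setOf_eq]
  refine forall₂_congr fun j hj => ?_
  rw [saPsum_eq (fun t => X t ω) (Finset.mem_Icc.1 hj).2]

lemma saG_eq_neg (X : ℕ → Ω → ℝ) (m : ℕ) :
    saG X m = (fun ω (i : Fin m) => -X (i : ℕ) ω) ⁻¹' saPge m := by
  ext ω
  simp only [saG, saPge, Set.mem_preimage, Set.mem_setOf_eq]
  refine forall₂_congr fun j hj => ?_
  rw [saPsum_eq (fun t => -X t ω) (Finset.mem_Icc.1 hj).2, Finset.sum_neg_distrib, le_neg,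
    neg_zero]

lemma saE_eq (X : ℕ → Ω → ℝ) (k : ℕ) :
    saE X k = (fun ω (i : Fin k) => -X (k - 1 - (i : ℕ)) ω) ⁻¹' saPgt k := by
  ext ω
  simp only [saE, saPgt, Set.mem_preimage, Set.mem_setOf_eq]
  constructor
  · intro h j hj
    obtain ⟨hj1, hjk⟩ := Finset.mem_Icc.1 hj
    rw [saPsum_eq (fun t => -X (k - 1 - t) ω) hjk, Finset.sum_neg_distrib,
      sa_rev_sum (fun t => X t ω) hjk, neg_pos]
    exact h (k - j) (by omega)
  · intro h j hjk
    have hm : k - j ∈ Finset.Icc 1 k := Finset.mem_Icc.2 ⟨by omega, by omega⟩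
    have := h (k - j) hm
    rw [saPsum_eq (fun t => -X (k - 1 - t) ω) (by omega : k - j ≤ k), Finset.sum_neg_distrib,
      sa_rev_sum (fun t => X t ω) (by omega : k - j ≤ k), neg_pos] at this
    rwa [show k - (k - j) = j by omega] at this

lemma saF_eq (X : ℕ → Ω → ℝ) (k m : ℕ) :
    saF X k m = (fun ω (i : Fin m) => X (k + (i : ℕ)) ω) ⁻¹' saPge m := by
  ext ω
  simp only [saF, saPge, Set.mem_preimage, Set.mem_setOf_eq]
  refine forall₂_congr fun j hj => ?_
  rw [saPsum_eq (fun t => X (k + t) ω) (Finset.mem_Icc.1 hj).2,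
    Finset.sum_Ico_eq_sum_range]
  simp

lemma sa_event_measure (μ : Measure Ω) (ν : Measure ℝ) [IsProbabilityMeasure ν]
    (Y : ℕ → Ω → ℝ) (hYm : ∀ n, Measurable (Y n))
    (hYindep : iIndepFun Y μ)
    (hYlaw : ∀ n, Measure.map (Y n) μ = ν)
    {m : ℕ} (ι : Fin m → ℕ) (hι : Function.Injective ι)
    {P : Set (Fin m → ℝ)} (hP : MeasurableSet P) :
    μ ((fun ω (i : Fin m) => Y (ι i) ω) ⁻¹' P) = Measure.pi (fun _ : Fin m => ν) P := by
  rw [← Measure.map_apply (measurable_pi_lambda _ fun i => hYm (ι i)) hP,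
    sa_joint_law μ ν Y hYm hYindep hYlaw ι hι]

lemma sa_exists_unique (s : ℕ → ℝ) (n : ℕ) :
    ∃! k, k < n + 1 ∧ (∀ j < k, s k < s j) ∧ ∀ j, k < j → j ≤ n → s k ≤ s j := by
  classical
  have hex : ∃ k, k ≤ n ∧ ∀ j ∈ Finset.range (n+1), s k ≤ s j := by
    obtain ⟨k0, hk0mem, hk0⟩ := Finset.exists_min_image (Finset.range (n+1)) s ⟨0, by simp⟩
    refine ⟨k0, ?_, hk0⟩
    have := Finset.mem_range.1 hk0mem
    omega
  set k := Nat.find hex with hkdef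
  obtain ⟨hkn', hkmin⟩ := Nat.find_spec hex
  have hkn : k < n + 1 := by omega
  have hkprop1 : ∀ j < k, s k < s j := by
    intro j hj
    have hnot := Nat.find_min hex hj
    push_neg at hnot
    obtain ⟨j', hj'mem, hj'⟩ := hnot (by omega)
    exact lt_of_le_of_lt (hkmin j' hj'mem) hj'
  have hkprop2 : ∀ j, k < j → j ≤ n → s k ≤ s j := fun j _ h2 =>
    hkmin j (Finset.mem_range.2 (by omega))
  refine ⟨k, ⟨hkn, hkprop1, hkprop2⟩, ?_⟩
  rintro k' ⟨hk'r, hleft, hright⟩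
  by_contra hne'
  rcases lt_or_gt_of_ne hne' with h | h
  · have h1 := hright k h (by omega)
    have h2 := hkprop1 k' h
    linarith
  · have h1 := hkprop2 k' h (by omega)
    have h2 := hleft k h
    linarith

theorem sa_conv (μ : Measure Ω) [IsProbabilityMeasure μ] (ν : Measure ℝ)
    [IsProbabilityMeasure ν]
    (hν1 : ∀ x : ℝ, ν {x} = 0) (hνneg : Measure.map (fun x : ℝ => -x) ν = ν)
    (X : ℕ → Ω → ℝ) (hmeas : ∀ n, Measurable (X n))
    (hindep : iIndepFun X μ)
    (hlawX : ∀ n, Measure.map (X n) μ = ν) (n : ℕ) :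
    ∑ k ∈ Finset.range (n+1), μ (saG X k) * μ (saG X (n-k)) = 1 := by
  have hnegm : ∀ i, Measurable (fun ω => -X i ω) := fun i => (hmeas i).neg
  have hnegindep : iIndepFun (fun i ω => -X i ω) μ :=
    hindep.comp (fun _ x => -x) (fun _ => measurable_neg)
  have hneglaw : ∀ i, Measure.map (fun ω => -X i ω) μ = ν := by
    intro i
    have h : (fun ω => -X i ω) = (fun x : ℝ => -x) ∘ X i := rfl
    rw [h, ← Measure.map_map measurable_neg (hmeas i), hlawX, hνneg]
  have hμG : ∀ m, μ (saG X m) = Measure.pi (fun _ : Fin m => ν) (saPle m) := fun m => by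
    rw [saG_eq, sa_event_measure μ ν X hmeas hindep hlawX (fun i : Fin m => (i:ℕ))
      Fin.val_injective (saPle_meas m)]
  have hμG' : ∀ m, μ (saG X m) = Measure.pi (fun _ : Fin m => ν) (saPge m) := fun m => by
    rw [saG_eq_neg, sa_event_measure μ ν _ hnegm hnegindep hneglaw (fun i : Fin m => (i:ℕ))
      Fin.val_injective (saPge_meas m)]
  have hμE : ∀ k, μ (saE X k) = Measure.pi (fun _ : Fin k => ν) (saPgt k) := fun k => by
    rw [saE_eq, sa_event_measure μ ν _ hnegm hnegindep hneglaw
      (fun i : Fin k => k - 1 - (i:ℕ)) ?_ (saPgt_meas k)]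
    intro i j hij
    have hij' : k - 1 - (i:ℕ) = k - 1 - (j:ℕ) := hij
    have hi := i.isLt
    have hj := j.isLt
    exact Fin.ext (by omega)
  have hμF : ∀ k m, μ (saF X k m) = Measure.pi (fun _ : Fin m => ν) (saPge m) := fun k m => by
    rw [saF_eq, sa_event_measure μ ν X hmeas hindep hlawX (fun i : Fin m => k + (i:ℕ))
      (fun i j hij => Fin.ext (by have h' : k + (i:ℕ) = k + (j:ℕ) := hij; omega))
      (saPge_meas m)]
  have hPgePgt : ∀ m, Measure.pi (fun _ : Fin m => ν) (saPgt m)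
      = Measure.pi (fun _ : Fin m => ν) (saPge m) := by
    intro m
    cases m with
    | zero =>
      have h : saPgt 0 = saPge 0 := by
        ext x; simp [saPgt, saPge]
      rw [h]
    | succ m' =>
      apply le_antisymm
      · exact measure_mono (fun x hx j hj => le_of_lt (hx j hj))
      · have hsub : saPge (m'+1) ⊆ saPgt (m'+1) ∪ (saPge (m'+1) \ saPgt (m'+1)) := by
          intro x hx
          by_cases h : x ∈ saPgt (m'+1)
          · exact Or.inl h
          · exact Or.inr ⟨hx, h⟩
        have hdiff : saPge (m'+1) \ saPgt (m'+1)
            ⊆ ⋃ j ∈ Finset.Icc 1 (m'+1), {x : Fin (m'+1) → ℝ | saPsum x j = 0} := by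
          rintro x ⟨hge, hgt⟩
          simp only [saPgt, Set.mem_setOf_eq, not_forall] at hgt
          obtain ⟨j, hj, hle⟩ := hgt
          exact Set.mem_biUnion hj (le_antisymm (not_lt.1 hle) (hge j hj))
        have hnull : Measure.pi (fun _ : Fin (m'+1) => ν)
            (⋃ j ∈ Finset.Icc 1 (m'+1), {x : Fin (m'+1) → ℝ | saPsum x j = 0}) = 0 := by
          refine measure_biUnion_null_iff (Finset.countable_toSet _) |>.2 fun j hj => ?_
          exact sa_pi_psum_null ν hν1 m' j (Finset.mem_Icc.1 hj).1
        calc Measure.pi (fun _ : Fin (m'+1) => ν) (saPge (m'+1))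
            ≤ Measure.pi (fun _ : Fin (m'+1) => ν)
              (saPgt (m'+1) ∪ (saPge (m'+1) \ saPgt (m'+1))) := measure_mono hsub
          _ ≤ Measure.pi (fun _ : Fin (m'+1) => ν) (saPgt (m'+1))
              + Measure.pi (fun _ : Fin (m'+1) => ν) (saPge (m'+1) \ saPgt (m'+1)) :=
              measure_union_le _ _
          _ = Measure.pi (fun _ : Fin (m'+1) => ν) (saPgt (m'+1)) := by
              rw [measure_mono_null hdiff hnull, add_zero]
  have hEG : ∀ k, μ (saE X k) = μ (saG X k) := fun k => by
    rw [hμE, hPgePgt, ← hμG']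
  have hFG : ∀ k m, μ (saF X k m) = μ (saG X m) := fun k m => by
    rw [hμF, ← hμG']
  -- independence of saE and saF
  have hEF : ∀ k m, μ (saE X k ∩ saF X k m) = μ (saE X k) * μ (saF X k m) := by
    intro k m
    have hdisjST : Disjoint (Finset.range k) (Finset.Ico k (k+m)) := by
      rw [Finset.disjoint_left]
      intro i hi hi'
      simp only [Finset.mem_range] at hi
      simp only [Finset.mem_Ico] at hi'
      omega
    have hIF := hindep.indepFun_finset (Finset.range k) (Finset.Ico k (k+m)) hdisjST hmeas
    set ψ1 : (↥(Finset.range k) → ℝ) → (Fin k → ℝ) :=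
      fun v i => -(v ⟨k - 1 - (i:ℕ), by simp only [Finset.mem_range]; omega⟩) with hψ1
    set ψ2 : (↥(Finset.Ico k (k+m)) → ℝ) → (Fin m → ℝ) :=
      fun v i => v ⟨k + (i:ℕ), by simp only [Finset.mem_Ico]; omega⟩ with hψ2
    have hψ1m : Measurable ψ1 :=
      measurable_pi_lambda _ fun i => (measurable_pi_apply _).neg
    have hψ2m : Measurable ψ2 :=
      measurable_pi_lambda _ fun i => measurable_pi_apply _
    have hIF2 := hIF.comp hψ1m hψ2m
    have h1 : saE X k = (ψ1 ∘ fun a (i : ↥(Finset.range k)) => X (i:ℕ) a) ⁻¹' saPgt k :=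
      saE_eq X k
    have h2 : saF X k m
        = (ψ2 ∘ fun a (i : ↥(Finset.Ico k (k+m))) => X (i:ℕ) a) ⁻¹' saPge m :=
      saF_eq X k m
    rw [h1, h2]
    exact hIF2.measure_inter_preimage_eq_mul _ _ (saPgt_meas k) (saPge_meas m)
  -- the partition
  set Bset : ℕ → Set Ω := fun k => saE X k ∩ saF X k (n-k) with hBset
  have hBmeas : ∀ k, MeasurableSet (Bset k) := by
    intro k
    apply MeasurableSet.inter
    · rw [saE_eq]
      exact (measurable_pi_lambda _ fun i => (hnegm _).comp measurable_id) (saPgt_meas k)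
    · rw [saF_eq]
      exact (measurable_pi_lambda _ fun i => hmeas _) (saPge_meas (n-k))
  have hmemB : ∀ k, k ≤ n → ∀ ω : Ω, (ω ∈ Bset k ↔
      ((∀ j < k, (∑ i ∈ Finset.range k, X i ω) < ∑ i ∈ Finset.range j, X i ω) ∧
       (∀ j, k < j → j ≤ n →
          (∑ i ∈ Finset.range k, X i ω) ≤ ∑ i ∈ Finset.range j, X i ω))) := by
    intro k hkn ω
    constructor
    · rintro ⟨hE, hF⟩
      constructor
      · intro j hj
        have := hE j hj
        rw [Finset.sum_Ico_eq_sub _ (le_of_lt hj)] at this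
        linarith
      · intro j hkj hjn
        have := hF (j - k) (Finset.mem_Icc.2 ⟨by omega, by omega⟩)
        rw [show k + (j - k) = j by omega, Finset.sum_Ico_eq_sub _ (by omega : k ≤ j)] at this
        linarith
    · rintro ⟨h1, h2⟩
      constructor
      · intro j hj
        rw [Finset.sum_Ico_eq_sub _ (le_of_lt hj)]
        have := h1 j hj
        linarith
      · intro j hj
        obtain ⟨hj1, hj2⟩ := Finset.mem_Icc.1 hj
        rw [Finset.sum_Ico_eq_sub _ (by omega : k ≤ k + j)]
        have := h2 (k + j) (by omega) (by omega)
        linarith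
  have hcover : (Set.univ : Set Ω) = ⋃ k ∈ Finset.range (n+1), Bset k := by
    ext ω
    simp only [Set.mem_univ, true_iff, Set.mem_iUnion, exists_prop]
    obtain ⟨k, ⟨hkn, hp1, hp2⟩, -⟩ := sa_exists_unique (fun j => ∑ i ∈ Finset.range j, X i ω) n
    exact ⟨k, Finset.mem_range.2 hkn, (hmemB k (by omega) ω).2 ⟨hp1, hp2⟩⟩
  have hdisj : (Finset.range (n+1) : Set ℕ).Pairwise (Function.onFun Disjoint Bset) := by
    intro k1 h1 k2 h2 hne12
    simp only [Finset.coe_range, Set.mem_Iio] at h1 h2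
    rw [Function.onFun, Set.disjoint_left]
    intro ω hω1 hω2
    obtain ⟨kk, -, huniq⟩ := sa_exists_unique (fun j => ∑ i ∈ Finset.range j, X i ω) n
    have e1 := huniq k1 ⟨h1, ((hmemB k1 (by omega) ω).1 hω1)⟩
    have e2 := huniq k2 ⟨h2, ((hmemB k2 (by omega) ω).1 hω2)⟩
    exact hne12 (e1.trans e2.symm)
  symm
  calc (1 : ℝ≥0∞) = μ Set.univ := (measure_univ).symm
    _ = μ (⋃ k ∈ Finset.range (n+1), Bset k) := by rw [← hcover]
    _ = ∑ k ∈ Finset.range (n+1), μ (Bset k) :=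
        measure_biUnion_finset hdisj (fun k _ => hBmeas k)
    _ = ∑ k ∈ Finset.range (n+1), μ (saG X k) * μ (saG X (n-k)) := by
        refine Finset.sum_congr rfl fun k hk => ?_
        rw [hBset]
        simp only
        rw [hEF k (n-k), hEG k, hFG k (n-k)]

end P4
section P5

lemma sa_gf (r : ℕ → ℝ) (hnn : ∀ n, 0 ≤ r n) (hb : ∀ n, r n ≤ 1)
    (hconv : ∀ n, ∑ k ∈ Finset.range (n+1), r k * r (n-k) = 1)
    {β : ℝ} (hβ0 : 0 ≤ β) (hβ1 : β < 1) :
    Summable (fun n => r n * β^n) ∧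
      (1 - β) * (∑' n, r n * β^n) = Real.sqrt (1 - β) := by
  have hgeo : Summable (fun n : ℕ => β^n) := summable_geometric_of_lt_one hβ0 hβ1
  have hsum : Summable (fun n => r n * β^n) := by
    refine Summable.of_nonneg_of_le (fun n => mul_nonneg (hnn n) (pow_nonneg hβ0 n))
      (fun n => ?_) hgeo
    calc r n * β^n ≤ 1 * β^n := by
          exact mul_le_mul_of_nonneg_right (hb n) (pow_nonneg hβ0 n)
      _ = β^n := one_mul _
  refine ⟨hsum, ?_⟩
  set A := ∑' n, r n * β^n with hA
  have hnormsum : Summable (fun n => ‖r n * β^n‖) := by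
    have : (fun n => ‖r n * β^n‖) = fun n => r n * β^n := by
      funext n
      exact Real.norm_of_nonneg (mul_nonneg (hnn n) (pow_nonneg hβ0 n))
    rw [this]
    exact hsum
  have hcauchy := tsum_mul_tsum_eq_tsum_sum_range_of_summable_norm hnormsum hnormsum
  have hsq : A * A = (1 - β)⁻¹ := by
    rw [hA, hcauchy]
    have hterm : ∀ n : ℕ, ∑ k ∈ Finset.range (n+1), (r k * β^k) * (r (n-k) * β^(n-k))
        = β^n := by
      intro n
      have : ∀ k ∈ Finset.range (n+1), (r k * β^k) * (r (n-k) * β^(n-k))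
          = (r k * r (n-k)) * β^n := by
        intro k hk
        have hkn : k ≤ n := by
          have := Finset.mem_range.1 hk; omega
        have : β^k * β^(n-k) = β^n := by
          rw [← pow_add]
          congr 1
          omega
        rw [← this]; ring
      rw [Finset.sum_congr rfl this, ← Finset.sum_mul, hconv n, one_mul]
    rw [tsum_congr hterm, tsum_geometric_of_lt_one hβ0 hβ1]
  have hApos : 0 ≤ A := tsum_nonneg (fun n => mul_nonneg (hnn n) (pow_nonneg hβ0 n))
  have hAval : A = (Real.sqrt (1 - β))⁻¹ := by
    have h1 : Real.sqrt (A * A) = Real.sqrt ((1 - β)⁻¹) := by rw [hsq]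
    rw [Real.sqrt_mul_self hApos, Real.sqrt_inv] at h1
    exact h1
  rw [hAval]
  have hpos : (0:ℝ) < 1 - β := by linarith
  rw [← Real.div_sqrt (x := 1 - β)]
  field_simp
  rw [Real.sq_sqrt hpos.le]

lemma sa_limit_zero (r : ℕ → ℝ) (hnn : ∀ n, 0 ≤ r n) (hb : ∀ n, r n ≤ 1)
    (hmono : ∀ n, r (n+1) ≤ r n)
    (hconv : ∀ n, ∑ k ∈ Finset.range (n+1), r k * r (n-k) = 1)
    {L : ℝ} (hL : Filter.Tendsto r Filter.atTop (nhds L)) : L = 0 := by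
  have hL0 : 0 ≤ L := le_of_tendsto_of_tendsto' tendsto_const_nhds hL (fun n => hnn n)
  have hmono' : Antitone r := antitone_nat_of_succ_le hmono
  have hLle : ∀ n, L ≤ r n := fun n =>
    le_of_tendsto hL (Filter.eventually_atTop.2 ⟨n, fun m hm => hmono' hm⟩)
  have key : ∀ β : ℝ, 0 ≤ β → β < 1 → L ≤ Real.sqrt (1 - β) := by
    intro β hβ0 hβ1
    obtain ⟨hsum, hval⟩ := sa_gf r hnn hb hconv hβ0 hβ1
    have hgeo : Summable (fun n : ℕ => L * β^n) :=
      (summable_geometric_of_lt_one hβ0 hβ1).mul_left L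
    have hAle : L * (1 - β)⁻¹ ≤ ∑' n, r n * β^n := by
      have h1 : ∑' n : ℕ, L * β^n = L * (1 - β)⁻¹ := by
        rw [tsum_mul_left, tsum_geometric_of_lt_one hβ0 hβ1]
      rw [← h1]
      exact Summable.tsum_le_tsum (fun n => mul_le_mul_of_nonneg_right (hLle n) (pow_nonneg hβ0 n))
        hgeo hsum
    have hpos : (0:ℝ) < 1 - β := by linarith
    calc L = (1 - β) * (L * (1 - β)⁻¹) := by field_simp
      _ ≤ (1 - β) * ∑' n, r n * β^n := by
          exact mul_le_mul_of_nonneg_left hAle (le_of_lt hpos)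
      _ = Real.sqrt (1 - β) := hval
  by_contra hne
  have hLpos : 0 < L := lt_of_le_of_ne hL0 (Ne.symm hne)
  set β := 1 - min (L^2/2) (1/2) with hβ
  have h1 : 0 ≤ β := by
    have := min_le_right (L^2/2) (1/2)
    simp only [hβ]
    linarith
  have h2 : β < 1 := by
    have h3 : 0 < min (L^2/2) (1/2) := lt_min (by positivity) (by norm_num)
    simp only [hβ]
    linarith
  have h4 := key β h1 h2
  have h5 : 1 - β = min (L^2/2) (1/2) := by simp [hβ]
  rw [h5] at h4
  have h6 : Real.sqrt (min (L^2/2) (1/2)) ≤ Real.sqrt (L^2/2) :=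
    Real.sqrt_le_sqrt (min_le_left _ _)
  have h7 : Real.sqrt (L^2/2) < L := by
    rw [show L^2/2 = L^2 * (1/2) by ring, Real.sqrt_mul (sq_nonneg L),
      Real.sqrt_sq hL0]
    · nlinarith [Real.sq_sqrt (by norm_num : (0:ℝ) ≤ 1/2),
        Real.sqrt_nonneg (1/2:ℝ), Real.sqrt_lt_sqrt (by norm_num : (0:ℝ) ≤ 1/2) (by norm_num : (1/2:ℝ) < 1),
        Real.sqrt_one]
  linarith

end P5

/-- Sparre Andersen's formula: for a random walk started at 0 with i.i.d.
increments having a symmetric probability density `ρ`, and `τ_{0+} = inf{n ≥ 1 : S_n > 0}`,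
one has `E[β^{τ_{0+}}] = 1 - √(1-β)` for all `β ∈ [0,1]`, with the convention that
`β^{τ_{0+}} = 0` on the event `{τ_{0+} = ∞}`. -/
theorem sparre_andersen_formula
    {Ω : Type*} [MeasurableSpace Ω] (μ : Measure Ω) [IsProbabilityMeasure μ]
    (ρ : ℝ → ℝ) (hρpos : ∀ x, 0 ≤ ρ x) (hρint : ∫ x, ρ x = 1)
    (hρsymm : ∀ x, ρ (-x) = ρ x)
    (X : ℕ → Ω → ℝ) (hmeas : ∀ n, Measurable (X n))
    (hindep : iIndepFun X μ)
    (hlaw : ∀ n, Measure.map (X n) μ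
      = volume.withDensity (fun x => ENNReal.ofReal (ρ x)))
    (S : ℕ → Ω → ℝ) (hS : ∀ n ω, S n ω = ∑ k ∈ Finset.range n, X k ω)
    (β : ℝ) (hβ : β ∈ Set.Icc (0:ℝ) 1) :
    ∫ ω, (if ∃ n, 1 ≤ n ∧ 0 < S n ω
          then β ^ sInf {n | 1 ≤ n ∧ 0 < S n ω} else 0) ∂μ
      = 1 - Real.sqrt (1 - β) := by
  classical
  obtain ⟨hβ0, hβle1⟩ := hβ
  haveI hνprob : IsProbabilityMeasure (saNu ρ) := saNu_prob ρ hρpos hρint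
  have hν1 : ∀ x : ℝ, saNu ρ {x} = 0 := saNu_singleton ρ
  have hνneg : Measure.map (fun x : ℝ => -x) (saNu ρ) = saNu ρ := saNu_neg ρ hρsymm
  have hlaw' : ∀ n, Measure.map (X n) μ = saNu ρ := hlaw
  have hconvE := sa_conv μ (saNu ρ) hν1 hνneg X hmeas hindep hlaw'
  set a : ℕ → ℝ≥0∞ := fun m => μ (saG X m) with ha
  set r : ℕ → ℝ := fun m => (a m).toReal with hr
  have hane : ∀ m, a m ≠ ⊤ := fun m => measure_ne_top μ _
  have hr0 : r 0 = 1 := by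
    have h : saG X 0 = Set.univ := by ext ω; simp [saG]
    simp [hr, ha, h]
  have hGanti : ∀ m, saG X (m+1) ⊆ saG X m := by
    intro m ω hω j hj
    obtain ⟨h1, h2⟩ := Finset.mem_Icc.1 hj
    exact hω j (Finset.mem_Icc.2 ⟨h1, by omega⟩)
  have hrmono : ∀ m, r (m+1) ≤ r m :=
    fun m => ENNReal.toReal_mono (hane m) (measure_mono (hGanti m))
  have hrnn : ∀ m, 0 ≤ r m := fun m => ENNReal.toReal_nonneg
  have hrb : ∀ m, r m ≤ 1 := by
    intro m
    have h1 : a m ≤ 1 := prob_le_one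
    simpa using ENNReal.toReal_mono (by simp) h1
  have hrconv : ∀ n, ∑ k ∈ Finset.range (n+1), r k * r (n-k) = 1 := by
    intro n
    have h := congrArg ENNReal.toReal (hconvE n)
    rw [ENNReal.toReal_sum (fun k _ => ENNReal.mul_ne_top (hane k) (hane (n-k)))] at h
    simpa [ENNReal.toReal_mul] using h
  have hGmeas : ∀ m, MeasurableSet (saG X m) := by
    intro m
    have h : saG X m = ⋂ j ∈ Finset.Icc 1 m, {ω | ∑ i ∈ Finset.range j, X i ω ≤ 0} := by
      ext ω; simp [saG]
    rw [h]
    exact MeasurableSet.biInter (Finset.countable_toSet _) fun j _ =>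
      measurableSet_le (Finset.measurable_sum _ fun i _ => hmeas i) measurable_const
  have hSmeas : ∀ n, Measurable (S n) := by
    intro n
    have h : S n = fun ω => ∑ i ∈ Finset.range n, X i ω := funext fun ω => hS n ω
    rw [h]
    exact Finset.measurable_sum _ fun i _ => hmeas i
  have hGiff : ∀ m ω, ω ∈ saG X m ↔ ∀ j, 1 ≤ j → j ≤ m → S j ω ≤ 0 := by
    intro m ω
    simp only [saG, Set.mem_setOf_eq]
    constructor
    · intro h j h1 h2
      rw [hS]
      exact h j (Finset.mem_Icc.2 ⟨h1, h2⟩)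
    · intro h j hj
      rw [← hS]
      exact h j (Finset.mem_Icc.1 hj).1 (Finset.mem_Icc.1 hj).2
  have hpoint : ∀ ω, (if ∃ n, 1 ≤ n ∧ 0 < S n ω
        then β ^ sInf {n | 1 ≤ n ∧ 0 < S n ω} else 0)
      = ∑' k : ℕ, Set.indicator (saG X k \ saG X (k+1)) (fun _ => β^(k+1)) ω := by
    intro ω
    by_cases hω : ∃ n, 1 ≤ n ∧ 0 < S n ω
    · rw [if_pos hω]
      set t := sInf {n | 1 ≤ n ∧ 0 < S n ω} with ht
      have htmem : 1 ≤ t ∧ 0 < S t ω := Nat.sInf_mem hω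
      have ht1 : 1 ≤ t := htmem.1
      have hnotmem : ∀ m, m < t → ¬(1 ≤ m ∧ 0 < S m ω) := fun m hm =>
        Nat.notMem_of_lt_sInf hm
      have hGch : ∀ k, ω ∈ saG X k ↔ k < t := by
        intro k
        rw [hGiff]
        constructor
        · intro h
          by_contra hkt
          push_neg at hkt
          have := h t htmem.1 hkt
          linarith [htmem.2]
        · intro hkt j h1 h2
          by_contra hpos
          push_neg at hpos
          exact hnotmem j (by omega) ⟨h1, hpos⟩
      have hind : ∀ k : ℕ, Set.indicator (saG X k \ saG X (k+1)) (fun _ => β^(k+1)) ω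
          = if k + 1 = t then β^(k+1) else 0 := by
        intro k
        by_cases hk : k + 1 = t
        · rw [if_pos hk, Set.indicator_of_mem]
          exact ⟨(hGch k).2 (by omega), fun hmem => by have := (hGch (k+1)).1 hmem; omega⟩
        · rw [if_neg hk, Set.indicator_of_notMem]
          rintro ⟨h1, h2⟩
          have hk1 := (hGch k).1 h1
          have hk2 : ¬ (k+1 < t) := fun hc => h2 ((hGch (k+1)).2 hc)
          omega
      rw [tsum_congr hind,
        tsum_eq_single (t-1) (fun k hk => by rw [if_neg (by omega)]),
        if_pos (by omega : t - 1 + 1 = t)]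
      congr 1
      omega
    · rw [if_neg hω]
      symm
      push_neg at hω
      have hz : ∀ k : ℕ, Set.indicator (saG X k \ saG X (k+1)) (fun _ => β^(k+1)) ω = 0 := by
        intro k
        apply Set.indicator_of_notMem
        rintro ⟨-, h2⟩
        apply h2
        rw [hGiff]
        intro j h1 h2
        exact hω j h1
      rw [tsum_congr hz]
      exact tsum_zero
  rcases lt_or_eq_of_le hβle1 with hβ1 | hβ1
  · -- β < 1
    obtain ⟨hsum, hval⟩ := sa_gf r hrnn hrb hrconv hβ0 hβ1
    have hDD : ∀ k, MeasurableSet (saG X k \ saG X (k+1)) :=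
      fun k => (hGmeas k).diff (hGmeas (k+1))
    have hμDD : ∀ k : ℕ, (μ (saG X k \ saG X (k+1))).toReal = r k - r (k+1) := by
      intro k
      rw [measure_diff (hGanti k) (hGmeas (k+1)).nullMeasurableSet (hane (k+1)),
        ENNReal.toReal_sub_of_le (measure_mono (hGanti k)) (hane k)]
    have hint : ∫ ω, (if ∃ n, 1 ≤ n ∧ 0 < S n ω
          then β ^ sInf {n | 1 ≤ n ∧ 0 < S n ω} else 0) ∂μ
        = ∑' k : ℕ, ∫ ω, Set.indicator (saG X k \ saG X (k+1)) (fun _ => β^(k+1)) ω ∂μ := by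
      rw [integral_congr_ae (Filter.Eventually.of_forall hpoint)]
      refine integral_tsum (fun k => ?_) ?_
      · exact (stronglyMeasurable_const.indicator (hDD k)).aestronglyMeasurable
      · have hbd : ∀ k : ℕ, ∫⁻ ω, ‖Set.indicator (saG X k \ saG X (k+1))
            (fun _ => β^(k+1)) ω‖₊ ∂μ ≤ ENNReal.ofReal (β^(k+1)) := by
          intro k
          have h1 : ∀ ω, (‖Set.indicator (saG X k \ saG X (k+1)) (fun _ => β^(k+1)) ω‖₊ : ℝ≥0∞)
              ≤ ENNReal.ofReal (β^(k+1)) := by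
            intro ω
            by_cases hmem : ω ∈ saG X k \ saG X (k+1)
            · rw [Set.indicator_of_mem hmem]
              rw [Real.nnnorm_of_nonneg (pow_nonneg hβ0 _)]
              exact le_of_eq (ENNReal.ofReal_eq_coe_nnreal _).symm
            · rw [Set.indicator_of_notMem hmem]
              simp
          calc ∫⁻ ω, (‖Set.indicator (saG X k \ saG X (k+1)) (fun _ => β^(k+1)) ω‖₊ : ℝ≥0∞) ∂μ
              ≤ ∫⁻ _, ENNReal.ofReal (β^(k+1)) ∂μ := lintegral_mono h1
            _ = ENNReal.ofReal (β^(k+1)) := by simp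
        refine ne_top_of_le_ne_top ?_ (ENNReal.tsum_le_tsum hbd)
        have hsg : Summable (fun k : ℕ => β^(k+1)) := by
          have := (summable_geometric_of_lt_one hβ0 hβ1).mul_left β
          refine this.congr fun k => ?_
          ring
        rw [← ENNReal.ofReal_tsum_of_nonneg (fun k => pow_nonneg hβ0 _) hsg]
        exact ENNReal.ofReal_ne_top
    have hIk : ∀ k : ℕ, ∫ ω, Set.indicator (saG X k \ saG X (k+1)) (fun _ => β^(k+1)) ω ∂μ
        = r k * β^(k+1) - r (k+1) * β^(k+1) := by
      intro k
      rw [integral_indicator_const _ (hDD k), Measure.real, hμDD k, smul_eq_mul]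
      ring
    rw [hint, tsum_congr hIk]
    have h1 : Summable (fun k : ℕ => r k * β^(k+1)) := by
      refine (hsum.mul_left β).congr fun k => ?_
      ring
    have h2 : Summable (fun k : ℕ => r (k+1) * β^(k+1)) :=
      (summable_nat_add_iff 1).2 hsum
    rw [Summable.tsum_sub h1 h2]
    have htA : ∑' k : ℕ, r k * β^(k+1) = β * ∑' n, r n * β^n := by
      rw [← tsum_mul_left]
      refine tsum_congr fun k => ?_
      ring
    have htB : ∑' k : ℕ, r (k+1) * β^(k+1) = (∑' n, r n * β^n) - 1 := by
      have h := Summable.tsum_eq_zero_add hsum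
      rw [hr0] at h
      simp only [pow_zero, mul_one] at h
      linarith
    rw [htA, htB]
    linarith [hval]
  · -- β = 1
    subst hβ1
    set U : Set Ω := {ω | ∃ n, 1 ≤ n ∧ 0 < S n ω} with hUdef
    have hUmeas : MeasurableSet U := by
      have h : U = ⋃ n, ⋃ (_ : 1 ≤ n), {ω | 0 < S n ω} := by
        ext ω
        simp [hUdef]
      rw [h]
      exact MeasurableSet.iUnion fun n => MeasurableSet.iUnion fun _ =>
        measurableSet_lt measurable_const (hSmeas n)
    have hptw : ∀ ω : Ω, (if ∃ n, 1 ≤ n ∧ 0 < S n ω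
          then (1:ℝ) ^ sInf {n | 1 ≤ n ∧ 0 < S n ω} else 0)
        = Set.indicator U (fun _ => (1:ℝ)) ω := by
      intro ω
      by_cases h : ∃ n, 1 ≤ n ∧ 0 < S n ω
      · rw [if_pos h, Set.indicator_of_mem (show ω ∈ U from h), one_pow]
      · rw [if_neg h, Set.indicator_of_notMem (show ω ∉ U from h)]
    have hUc : Uᶜ = ⋂ k, saG X k := by
      ext ω
      simp only [Set.mem_compl_iff, hUdef, Set.mem_setOf_eq, Set.mem_iInter, not_exists]
      constructor
      · intro h k
        rw [hGiff]
        intro j h1 _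
        by_contra hp
        push_neg at hp
        exact h j ⟨h1, hp⟩
      · intro h n
        rintro ⟨h1, h2⟩
        have := (hGiff n ω).1 (h n) n h1 le_rfl
        linarith
    have htend : Filter.Tendsto (fun k => μ (saG X k)) Filter.atTop
        (nhds (μ (⋂ k, saG X k))) := by
      refine tendsto_measure_iInter_atTop (fun k => (hGmeas k).nullMeasurableSet)
        (antitone_nat_of_succ_le fun n => hGanti n) ⟨0, hane 0⟩
    have hrlim : Filter.Tendsto r Filter.atTop (nhds ((μ (⋂ k, saG X k)).toReal)) :=
      (ENNReal.tendsto_toReal (measure_ne_top μ _)).comp htend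
    have hL0 := sa_limit_zero r hrnn hrb hrmono hrconv hrlim
    have hcompl := measure_add_measure_compl (μ := μ) hUmeas
    have htr := congrArg ENNReal.toReal hcompl
    rw [ENNReal.toReal_add (measure_ne_top μ _) (measure_ne_top μ _)] at htr
    have hUcval : (μ Uᶜ).toReal = 0 := by rw [hUc]; exact hL0
    have hUval : (μ U).toReal = 1 := by
      rw [hUcval] at htr
      simpa using htr
    calc ∫ ω, (if ∃ n, 1 ≤ n ∧ 0 < S n ω
          then (1:ℝ) ^ sInf {n | 1 ≤ n ∧ 0 < S n ω} else 0) ∂μ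
        = ∫ ω, Set.indicator U (fun _ => (1:ℝ)) ω ∂μ :=
          integral_congr_ae (Filter.Eventually.of_forall hptw)
      _ = (μ U).toReal • (1:ℝ) := integral_indicator_const _ hUmeas
      _ = 1 - Real.sqrt (1 - 1) := by
          rw [hUval, sub_self, Real.sqrt_zero]
          norm_num
end

section
/- Let (S_n)_{n≥0} be a random walk started at 0 with i.i.d. increments having a continuous symmetric probability density ρ on ℝ, and let τ_{0+} = inf{n ≥ 1 : S_n > 0}. Then for every n ≥ 1, the density at 0 of S_n restricted to the event {τ_{0+} = n} equals (1/n) ρ^{*n}(0); that is, E[δ_0(S_n); τ_{0+} = n] = (1/n) E[δ_0(S_n)], where E[δ_0(S_n)] = ρ^{*n}(0). -/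
open MeasureTheory

/-- `convN ρ n` is the `(n+1)`-fold convolution `ρ^{*(n+1)}` of `ρ` with itself. -/
noncomputable def convN (ρ : ℝ → ℝ) : ℕ → ℝ → ℝ
  | 0 => ρ
  | n+1 => fun x => ∫ y, convN ρ n (x - y) * ρ y

/-- For `x : Fin m → ℝ`, `ext x i` is the `i`-th point of the bridge path:
`x_{i}` for `1 ≤ i ≤ m` and `0` otherwise (in particular at `i = 0` and `i = m+1`). -/
noncomputable def ext {m : ℕ} (x : Fin m → ℝ) (i : ℕ) : ℝ :=
  if h : 1 ≤ i ∧ i ≤ m then x ⟨i-1, by omega⟩ else 0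

noncomputable def lconv (ρ : ℝ → ℝ) : ℕ → ℝ → ENNReal
  | 0 => fun x => ENNReal.ofReal (ρ x)
  | n+1 => fun x => ∫⁻ y, lconv ρ n (x - y) * ENNReal.ofReal (ρ y)

section Analytic

variable {ρ : ℝ → ℝ}

lemma lconv_measurable (hm : Measurable ρ) : ∀ n, Measurable (lconv ρ n)
  | 0 => ENNReal.measurable_ofReal.comp hm
  | n+1 => by
    have h1 : Measurable fun p : ℝ × ℝ => lconv ρ n (p.1 - p.2) * ENNReal.ofReal (ρ p.2) :=
      ((lconv_measurable hm n).comp (measurable_fst.sub measurable_snd)).mul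
        ((ENNReal.measurable_ofReal.comp hm).comp measurable_snd)
    exact Measurable.lintegral_prod_right h1

lemma lintegral_ofReal_rho (hpos : ∀ x, 0 ≤ ρ x) (hint : ∫ x, ρ x = 1) :
    ∫⁻ x, ENNReal.ofReal (ρ x) = 1 := by
  rw [← ofReal_integral_eq_lintegral_ofReal (integrable_of_integral_eq_one hint)
    (Filter.Eventually.of_forall hpos), hint, ENNReal.ofReal_one]

lemma lintegral_lconv (hm : Measurable ρ) (hpos : ∀ x, 0 ≤ ρ x) (hint : ∫ x, ρ x = 1) :
    ∀ n, ∫⁻ x, lconv ρ n x = 1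
  | 0 => lintegral_ofReal_rho hpos hint
  | n+1 => by
    have h1 : Measurable fun p : ℝ × ℝ => lconv ρ n (p.1 - p.2) * ENNReal.ofReal (ρ p.2) :=
      ((lconv_measurable hm n).comp (measurable_fst.sub measurable_snd)).mul
        ((ENNReal.measurable_ofReal.comp hm).comp measurable_snd)
    show ∫⁻ x, ∫⁻ y, lconv ρ n (x - y) * ENNReal.ofReal (ρ y) = 1
    rw [lintegral_lintegral_swap h1.aemeasurable]
    have : ∀ y : ℝ, ∫⁻ x, lconv ρ n (x - y) * ENNReal.ofReal (ρ y) = ENNReal.ofReal (ρ y) := by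
      intro y
      rw [lintegral_mul_const _ (show Measurable fun x => lconv ρ n (x - y) from (lconv_measurable hm n).comp (measurable_id.sub measurable_const))]
      have : ∫⁻ x, lconv ρ n (x - y) = ∫⁻ x, lconv ρ n x := by
        simp_rw [sub_eq_add_neg]
        exact lintegral_add_right_eq_self (lconv ρ n) (-y)
      rw [this, lintegral_lconv hm hpos hint n, one_mul]
    simp_rw [this]
    exact lintegral_ofReal_rho hpos hint

lemma lconv_ae_lt_top (hm : Measurable ρ) (hpos : ∀ x, 0 ≤ ρ x) (hint : ∫ x, ρ x = 1) (n : ℕ) :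
    ∀ᵐ x, lconv ρ n x < ⊤ :=
  ae_lt_top (lconv_measurable hm n) (by rw [lintegral_lconv hm hpos hint n]; exact ENNReal.one_ne_top)

lemma convN_eq_toReal_lconv (hm : Measurable ρ) (hpos : ∀ x, 0 ≤ ρ x) (hint : ∫ x, ρ x = 1) :
    ∀ n z, convN ρ n z = (lconv ρ n z).toReal
  | 0, z => by simp [convN, lconv, ENNReal.toReal_ofReal (hpos z)]
  | n+1, z => by
    have ih := convN_eq_toReal_lconv hm hpos hint n
    have hmz : Measurable fun y => (lconv ρ n (z - y)).toReal * ρ y :=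
      (((lconv_measurable hm n).comp (measurable_const.sub measurable_id)).ennreal_toReal).mul hm
    have h1 : convN ρ (n+1) z = ∫ y, (lconv ρ n (z - y)).toReal * ρ y := by
      show (∫ y, convN ρ n (z - y) * ρ y) = _
      congr 1; funext y; rw [ih]
    rw [h1, integral_eq_lintegral_of_nonneg_ae
      (Filter.Eventually.of_forall fun y => mul_nonneg ENNReal.toReal_nonneg (hpos y))
      hmz.aestronglyMeasurable]
    congr 1
    have hae : ∀ᵐ y : ℝ, lconv ρ n (z - y) < ⊤ :=
      (Measure.measurePreserving_sub_left volume z).quasiMeasurePreserving.ae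
        (lconv_ae_lt_top hm hpos hint n)
    show ∫⁻ y, ENNReal.ofReal ((lconv ρ n (z - y)).toReal * ρ y) = lconv ρ (n+1) z
    have : ∀ᵐ y : ℝ, ENNReal.ofReal ((lconv ρ n (z - y)).toReal * ρ y)
        = lconv ρ n (z - y) * ENNReal.ofReal (ρ y) := by
      filter_upwards [hae] with y hy
      rw [ENNReal.ofReal_mul ENNReal.toReal_nonneg, ENNReal.ofReal_toReal hy.ne]
    rw [lintegral_congr_ae this]
    rfl

end Analytic



lemma measurable_ext (m i : ℕ) : Measurable fun x : Fin m → ℝ => ext x i := by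
  unfold ext
  by_cases h : 1 ≤ i ∧ i ≤ m
  · simpa [h] using measurable_pi_apply (⟨i-1, by omega⟩ : Fin m)
  · simpa [h] using measurable_const

lemma ext_zero {m : ℕ} (x : Fin m → ℝ) : ext x 0 = 0 := by simp [ext]

lemma ext_of_gt {m i : ℕ} (x : Fin m → ℝ) (h : m < i) : ext x i = 0 := by
  simp only [ext]; rw [dif_neg (by omega)]

lemma ext_succ_fin {m : ℕ} (x : Fin m → ℝ) (j : Fin m) : ext x (j.1+1) = x j := by
  simp only [ext]; rw [dif_pos (by omega : 1 ≤ j.1+1 ∧ j.1+1 ≤ m)]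
  exact congrArg x (Fin.ext (by simp))

variable {ρ : ℝ → ℝ}

noncomputable def bfac (ρ : ℝ → ℝ) {m : ℕ} (x : Fin m → ℝ) (i : ℕ) : ENNReal :=
  ENNReal.ofReal (ρ (ext x (i+1) - ext x i))

lemma measurable_bfac (hm : Measurable ρ) (m i : ℕ) :
    Measurable fun x : Fin m → ℝ => bfac ρ x i :=
  ENNReal.measurable_ofReal.comp (hm.comp ((measurable_ext m (i+1)).sub (measurable_ext m i)))



lemma measurable_bridge (hm : Measurable ρ) (m : ℕ) (z : ℝ) :
    Measurable fun x : Fin m → ℝ =>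
      (∏ i ∈ Finset.range m, bfac ρ x i) * ENNReal.ofReal (ρ (z - ext x m)) :=
  (Finset.measurable_prod _ fun i _ => measurable_bfac hm m i).mul
    (ENNReal.measurable_ofReal.comp (hm.comp (measurable_const.sub (measurable_ext m m))))

lemma bridge (hm : Measurable ρ) :
    ∀ (m : ℕ) (z : ℝ),
      (∫⁻ x : Fin m → ℝ,
        (∏ i ∈ Finset.range m, bfac ρ x i) * ENNReal.ofReal (ρ (z - ext x m)))
      = lconv ρ m z
  | 0, z => by
    simp only [Finset.range_zero, Finset.prod_empty, one_mul]
    have h0 : ∀ x : Fin 0 → ℝ, ext x 0 = 0 := fun x => ext_zero x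
    simp_rw [h0, sub_zero]
    rw [lintegral_const]
    have : (volume : Measure (Fin 0 → ℝ)) Set.univ = 1 := by
      rw [volume_pi, Measure.pi_univ]; simp
    rw [this, mul_one]
    rfl
  | m+1, z => by
    have ih := bridge hm m
    set e := MeasurableEquiv.piFinSuccAbove (fun _ : Fin (m+1) => ℝ) (Fin.last m) with he
    have mp : MeasurePreserving e volume volume :=
      volume_preserving_piFinSuccAbove (fun _ : Fin (m+1) => ℝ) (Fin.last m)
    set F : (Fin (m+1) → ℝ) → ENNReal := fun x =>
      (∏ i ∈ Finset.range (m+1), bfac ρ x i) * ENNReal.ofReal (ρ (z - ext x (m+1))) with hF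
    have hFm : Measurable F := measurable_bridge hm (m+1) z
    have key : ∫⁻ x, F x = ∫⁻ p : ℝ × (Fin m → ℝ), F (e.symm p) :=
      ((MeasurePreserving.symm e mp).lintegral_comp hFm).symm
    show ∫⁻ x, F x = lconv ρ (m+1) z
    rw [key]
    -- describe e.symm
    have hsymm1 : ∀ p : ℝ × (Fin m → ℝ), (e.symm p) (Fin.last m) = p.1 := by
      intro p
      have := e.apply_symm_apply p
      exact congrArg Prod.fst this
    have hsymm2 : ∀ (p : ℝ × (Fin m → ℝ)) (j : Fin m), (e.symm p) j.castSucc = p.2 j := by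
      intro p j
      have h := e.apply_symm_apply p
      have h2 := congrArg Prod.snd h
      have h3 := congrFun h2 j
      simpa [he, MeasurableEquiv.piFinSuccAbove, Fin.succAbove_last] using h3
    -- now compute F (e.symm (t, rest))
    have hfac : ∀ (t : ℝ) (rest : Fin m → ℝ),
        F (e.symm (t, rest)) =
          ((∏ i ∈ Finset.range m, bfac ρ rest i) * ENNReal.ofReal (ρ (t - ext rest m)))
            * ENNReal.ofReal (ρ (z - t)) := by
      intro t rest
      set y := e.symm (t, rest) with hy
      have hext : ∀ i, i ≤ m → ext y i = ext rest i := by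
        intro i hi
        by_cases h1 : 1 ≤ i
        · have : ext y i = y ⟨i-1, by omega⟩ := by simp only [ext]; rw [dif_pos ⟨h1, by omega⟩]
          rw [this]
          have hcast : (⟨i-1, by omega⟩ : Fin (m+1)) = (⟨i-1, by omega⟩ : Fin m).castSucc := rfl
          rw [hcast, hy, hsymm2]
          simp only [ext]; rw [dif_pos ⟨h1, hi⟩]
        · have : i = 0 := by omega
          simp [this, ext_zero]
      have hlast : ext y (m+1) = t := by
        have h5 : ext y (m+1) = y ⟨m, by omega⟩ := by
          simp only [ext]; rw [dif_pos (⟨by omega, by omega⟩ : 1 ≤ m+1 ∧ m+1 ≤ m+1)]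
          exact congrArg y (Fin.ext (by simp))
        rw [h5]
        have h6 : (⟨m, by omega⟩ : Fin (m+1)) = Fin.last m := rfl
        rw [h6, hy, hsymm1]
      rw [hF]
      simp only
      rw [Finset.prod_range_succ]
      have h1 : ∀ i ∈ Finset.range m, bfac ρ y i = bfac ρ rest i := by
        intro i hi
        simp only [Finset.mem_range] at hi
        unfold bfac
        rw [hext (i+1) (by omega), hext i (by omega)]
      rw [Finset.prod_congr rfl h1]
      unfold bfac
      rw [hlast, hext m (le_refl m)]
    simp_rw [hfac]
    rw [Measure.volume_eq_prod, lintegral_prod _ (by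
      apply Measurable.aemeasurable
      exact ((((Finset.measurable_prod _ fun i _ => (measurable_bfac hm m i).comp measurable_snd)).mul
        (ENNReal.measurable_ofReal.comp (hm.comp (measurable_fst.sub ((measurable_ext m m).comp measurable_snd))))).mul
        (ENNReal.measurable_ofReal.comp (hm.comp (measurable_const.sub measurable_fst)))))]
    have inner : ∀ t : ℝ,
        (∫⁻ rest : Fin m → ℝ,
          ((∏ i ∈ Finset.range m, bfac ρ rest i) * ENNReal.ofReal (ρ (t - ext rest m)))
            * ENNReal.ofReal (ρ (z - t)))
        = lconv ρ m t * ENNReal.ofReal (ρ (z - t)) := by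
      intro t
      rw [lintegral_mul_const _ (measurable_bridge hm m t), ih t]
    simp_rw [inner]
    have := (Measure.measurePreserving_sub_left volume z).lintegral_comp
      (f := fun t => lconv ρ m t * ENNReal.ofReal (ρ (z - t)))
      ((lconv_measurable hm m).mul
        (ENNReal.measurable_ofReal.comp (hm.comp (measurable_const.sub measurable_id))))
    rw [← this]
    show (∫⁻ y : ℝ, lconv ρ m (z - y) * ENNReal.ofReal (ρ (z - (z - y)))) = _
    simp_rw [sub_sub_cancel]
    rfl


section MatrixHelpers
variable {m : ℕ}

lemma mulVec_updCol (k : Fin m) (v x : Fin m → ℝ) (i : Fin m) :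
    ((Matrix.updateCol (1 : Matrix (Fin m) (Fin m) ℝ) k v).mulVec x) i
      = x i + (v i - if i = k then 1 else 0) * x k := by
  classical
  have hsum : ∀ c : Fin m,
      (Matrix.updateCol (1 : Matrix (Fin m) (Fin m) ℝ) k v) i c * x c
        = (if c = i then x i else 0)
          + (if c = k then (v i - if i = k then 1 else 0) * x k else 0) := by
    intro c
    simp only [Matrix.updateCol_apply, Matrix.one_apply]
    by_cases hck : c = k
    · subst hck
      by_cases hci : c = i
      · subst hci
        simp
        ring
      · rw [if_pos rfl, if_neg hci, if_pos rfl, if_neg (Ne.symm hci)]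
        ring
    · by_cases hci : c = i
      · subst hci
        rw [if_neg hck, if_pos rfl, if_pos rfl, if_neg hck, one_mul, add_zero]
      · rw [if_neg hck, if_neg (Ne.symm hci), if_neg hci, if_neg hck, zero_mul, add_zero]
  show (∑ c, (Matrix.updateCol (1 : Matrix (Fin m) (Fin m) ℝ) k v) i c * x c) = _
  rw [Finset.sum_congr rfl fun c _ => hsum c, Finset.sum_add_distrib,
    Finset.sum_ite_eq' Finset.univ i (fun c => x i), Finset.sum_ite_eq' Finset.univ k]
  simp

lemma det_updCol_one (k : Fin m) (v : Fin m → ℝ) :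
    (Matrix.updateCol (1 : Matrix (Fin m) (Fin m) ℝ) k v).det = v k := by
  rw [← Matrix.cramer_apply, Matrix.cramer_one]
  rfl

lemma mp_of_det {A : Matrix (Fin m) (Fin m) ℝ} (h : |A.det| = 1) :
    MeasurePreserving (Matrix.toLin' A) (volume : Measure (Fin m → ℝ)) volume := by
  have hd : A.det ≠ 0 := by
    intro h0; rw [h0] at h; simp at h
  refine ⟨(Matrix.toLin' A).continuous_of_finiteDimensional.measurable, ?_⟩
  rw [Real.map_matrix_volume_pi_eq_smul_volume_pi hd, abs_inv, h]
  simp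

lemma permMatrix_mulVec (σ : Equiv.Perm (Fin m)) (v : Fin m → ℝ) (j : Fin m) :
    ((σ.permMatrix ℝ).mulVec v) j = v (σ j) := by
  classical
  show (∑ c, (σ.permMatrix ℝ) j c * v c) = _
  have : ∀ c, (σ.permMatrix ℝ) j c * v c = if σ j = c then v c else 0 := by
    intro c
    simp only [Equiv.Perm.permMatrix, PEquiv.toMatrix_apply, Equiv.toPEquiv_apply,
      Option.mem_def, Option.some.injEq]
    by_cases h : σ j = c <;> simp [h]
  rw [Finset.sum_congr rfl fun c _ => this c, Finset.sum_ite_eq]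
  simp

lemma null_coord_zero (i : Fin m) : volume {x : Fin m → ℝ | x i = 0} = 0 := by
  rw [volume_pi]
  exact Measure.pi_hyperplane (fun _ => volume) i 0

lemma null_eq_coord {i j : Fin m} (hij : i ≠ j) :
    volume {x : Fin m → ℝ | x i = x j} = 0 := by
  classical
  set v : Fin m → ℝ := fun r => if r = i then (-1 : ℝ) else if r = j then 1 else 0 with hv
  set D := Matrix.updateCol (1 : Matrix (Fin m) (Fin m) ℝ) j v with hD
  have hdet : |D.det| = 1 := by
    rw [hD, det_updCol_one, hv]
    simp [Ne.symm hij]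
  have hmp := mp_of_det hdet
  have hset : {x : Fin m → ℝ | x i = x j}
      = (Matrix.toLin' D) ⁻¹' {y : Fin m → ℝ | y i = 0} := by
    ext x
    simp only [Set.mem_setOf_eq, Set.mem_preimage, Matrix.toLin'_apply]
    rw [hD, mulVec_updCol, hv]
    simp only [if_pos rfl, if_neg hij, if_true]
    constructor <;> intro h <;> nlinarith [h]
  rw [hset, hmp.measure_preimage
    ((measurableSet_eq_fun (measurable_pi_apply i) measurable_const).nullMeasurableSet)]
  exact null_coord_zero i

end MatrixHelpers






section Cyclic

variable {ρ : ℝ → ℝ} {m : ℕ}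

noncomputable def pos {m : ℕ} (x : Fin m → ℝ) (t : Fin (m+1)) : ℝ := ext x t.1

lemma pos_zero (x : Fin m → ℝ) : pos x 0 = 0 := ext_zero x

lemma pos_succ (x : Fin m → ℝ) (j : Fin m) : pos x j.succ = x j := ext_succ_fin x j

lemma measurable_pos (t : Fin (m+1)) : Measurable fun x : Fin m → ℝ => pos x t :=
  measurable_ext m t.1

/-- `u.pred`-style helper -/
lemma fin_pred_succ (u : Fin (m+1)) (h : u ≠ 0) :
    (⟨u.1 - 1, by
      have h' : u.1 ≠ 0 := fun hh => h (Fin.ext (by simp [hh]))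
      have := u.2; omega⟩ : Fin m).succ = u := by
  have h' : u.1 ≠ 0 := fun hh => h (Fin.ext (by simp [hh]))
  apply Fin.ext
  rw [Fin.val_succ]
  simp only []
  omega

noncomputable def Ffun (ρ : ℝ → ℝ) {m : ℕ} (x : Fin m → ℝ) : ENNReal :=
  ∏ t : Fin (m+1), ENNReal.ofReal (ρ (pos x (t+1) - pos x t))

lemma pos_add_one (x : Fin m → ℝ) (t : Fin (m+1)) : pos x (t+1) = ext x (t.1+1) := by
  unfold pos
  rw [Fin.val_add_one]
  by_cases h : t = Fin.last m
  · rw [if_pos h, ext_zero, ext_of_gt]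
    have : t.1 = m := by rw [h]; rfl
    omega
  · rw [if_neg h]

lemma F_eq_range (x : Fin m → ℝ) :
    ∏ i ∈ Finset.range (m+1), bfac ρ x i = Ffun ρ x := by
  rw [← Fin.prod_univ_eq_prod_range (fun i => bfac ρ x i) (m+1)]
  exact Finset.prod_congr rfl fun t _ => by rw [bfac, ← pos_add_one]; rfl

lemma measurable_Ffun (hm : Measurable ρ) : Measurable (Ffun ρ (m := m)) :=
  Finset.measurable_prod _ fun t _ =>
    ENNReal.measurable_ofReal.comp (hm.comp ((measurable_pos (t+1)).sub (measurable_pos t)))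

noncomputable def Rot {m : ℕ} (c : Fin (m+1)) (x : Fin m → ℝ) : Fin m → ℝ :=
  fun j => pos x (j.succ + c) - pos x c

lemma pos_rot (c : Fin (m+1)) (x : Fin m → ℝ) (t : Fin (m+1)) :
    pos (Rot c x) t = pos x (t + c) - pos x c := by
  by_cases ht : t = 0
  · subst ht; rw [pos_zero, zero_add, sub_self]
  · obtain ⟨j, rfl⟩ := Fin.eq_succ_of_ne_zero ht
    rw [pos_succ]; rfl

lemma F_rot (c : Fin (m+1)) (x : Fin m → ℝ) : Ffun ρ (Rot c x) = Ffun ρ x := by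
  unfold Ffun
  have h1 : ∀ t : Fin (m+1),
      ENNReal.ofReal (ρ (pos (Rot c x) (t+1) - pos (Rot c x) t))
        = (fun u => ENNReal.ofReal (ρ (pos x (u+1) - pos x u))) ((Equiv.addRight c) t) := by
    intro t
    rw [pos_rot, pos_rot]
    simp only [Equiv.coe_addRight]
    rw [sub_sub_sub_cancel_right, add_right_comm]
  exact (Finset.prod_congr rfl fun t _ => h1 t).trans
    (Equiv.prod_comp (Equiv.addRight c) (fun u => ENNReal.ofReal (ρ (pos x (u+1) - pos x u))))

def SetA {m : ℕ} (c : Fin (m+1)) : Set (Fin m → ℝ) :=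
  {x | ∀ t, t ≠ c → pos x t < pos x c}

lemma measurable_SetA (c : Fin (m+1)) : MeasurableSet (SetA (m := m) c) := by
  have : SetA (m := m) c = ⋂ (t : Fin (m+1)) (_ : t ≠ c), {x | pos x t < pos x c} := by
    ext x; simp [SetA]
  rw [this]
  exact MeasurableSet.iInter fun t => MeasurableSet.iInter fun _ =>
    measurableSet_lt (measurable_pos t) (measurable_pos c)

lemma rot_mem_iff (c : Fin (m+1)) (x : Fin m → ℝ) :
    Rot c x ∈ SetA 0 ↔ x ∈ SetA c := by
  constructor
  · intro h u hu
    have ht : u - c ≠ 0 := sub_ne_zero_of_ne hu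
    have h2 := h (u - c) ht
    rw [pos_rot, pos_zero] at h2
    have h3 : u - c + c = u := by abel
    rw [h3] at h2
    linarith
  · intro h t ht
    have htc : t + c ≠ c := by
      intro hh
      apply ht
      have : t + c - c = c - c := by rw [hh]
      simpa using this
    have h2 := h (t + c) htc
    rw [pos_rot, pos_zero]
    linarith

lemma rot_zero (x : Fin m → ℝ) : Rot 0 x = x := by
  funext j
  rw [Rot, pos_zero, add_zero, pos_succ, sub_zero]

lemma rot_measurePreserving (c : Fin (m+1)) :
    MeasurePreserving (Rot (m := m) c) volume volume := by
  by_cases hc : c = 0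
  · subst hc
    have : Rot (m := m) 0 = id := funext rot_zero
    rw [this]
    exact MeasurePreserving.id volume
  · obtain ⟨k', hk'⟩ := Fin.eq_succ_of_ne_zero hc
    classical
    set M := Matrix.updateCol (1 : Matrix (Fin m) (Fin m) ℝ) k' (fun _ => (-1:ℝ)) with hMdef
    have hM : ∀ (x : Fin m → ℝ) (i : Fin m),
        (M.mulVec x) i = (if i = k' then 0 else x i) - x k' := by
      intro x i
      rw [hMdef, mulVec_updCol]
      by_cases h : i = k' <;> simp [h] <;> ring
    have succ_ne : ∀ j : Fin m, j.succ + c ≠ c := by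
      intro j hh
      have h2 : j.succ + c - c = c - c := by rw [hh]
      simp only [add_sub_cancel_right, sub_self] at h2
      exact Fin.succ_ne_zero j h2
    set π : Fin m → Fin m := fun j =>
      if h : j.succ + c = 0 then k'
      else ⟨(j.succ + c).1 - 1, by
        have h' : (j.succ + c).1 ≠ 0 := fun hh => h (Fin.ext (by simp [hh]))
        have := (j.succ + c).2; omega⟩ with hπdef
    have hπ_succ : ∀ j : Fin m, j.succ + c ≠ 0 → (π j).succ = j.succ + c := by
      intro j h
      rw [hπdef]
      simp only [dif_neg h]
      exact fin_pred_succ (j.succ + c) h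
    have hπ_spec : ∀ (j : Fin m) (x : Fin m → ℝ),
        (M.mulVec x) (π j) = pos x (j.succ + c) - pos x c := by
      intro j x
      have hposc : pos x c = x k' := by rw [hk', pos_succ]
      by_cases h : j.succ + c = 0
      · rw [hπdef]; simp only [dif_pos h]
        rw [hM, if_pos rfl, h, pos_zero, hposc]
      · have h4 : π j ≠ k' := by
          intro hh
          apply succ_ne j
          rw [← hπ_succ j h, hh, ← hk']
        rw [hM, if_neg h4, hposc]
        congr 1
        rw [← hπ_succ j h, pos_succ]
    have hπ_inj : Function.Injective π := by
      intro j1 j2 hj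
      have key : j1.succ + c = j2.succ + c := by
        by_cases h1 : j1.succ + c = 0 <;> by_cases h2 : j2.succ + c = 0
        · rw [h1, h2]
        · exfalso
          apply succ_ne j2
          rw [← hπ_succ j2 h2, ← hj]
          rw [hπdef]; simp only [dif_pos h1]
          exact hk'.symm
        · exfalso
          apply succ_ne j1
          rw [← hπ_succ j1 h1, hj]
          rw [hπdef]; simp only [dif_pos h2]
          exact hk'.symm
        · rw [← hπ_succ j1 h1, ← hπ_succ j2 h2, hj]
      have h5 := add_right_cancel key
      exact Fin.succ_injective m h5
    set πe : Equiv.Perm (Fin m) :=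
      Equiv.ofBijective π ((Finite.injective_iff_bijective).mp hπ_inj) with hπe
    have hπe_apply : ∀ j, πe j = π j := fun j => rfl
    set P := πe.permMatrix ℝ with hP
    have hRot : Rot c = ⇑(Matrix.toLin' (P * M)) := by
      funext x j
      rw [Matrix.toLin'_apply, ← Matrix.mulVec_mulVec, hP, permMatrix_mulVec, hπe_apply,
        hπ_spec]
      rfl
    have hdet : |(P * M).det| = 1 := by
      rw [Matrix.det_mul, hP, Matrix.det_permutation, hMdef, det_updCol_one, abs_mul]
      rcases Int.units_eq_one_or (Equiv.Perm.sign πe) with h | h <;> rw [h] <;> norm_num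
    rw [hRot]
    exact mp_of_det hdet

lemma lintegral_SetA_eq (hm : Measurable ρ) (c : Fin (m+1)) :
    ∫⁻ x in SetA c, Ffun ρ x = ∫⁻ x in SetA (m := m) 0, Ffun ρ x := by
  have hInd : Measurable ((SetA (m := m) 0).indicator (Ffun ρ)) :=
    (measurable_Ffun hm).indicator (measurable_SetA 0)
  rw [← lintegral_indicator (measurable_SetA 0), ← lintegral_indicator (measurable_SetA c)]
  rw [← (rot_measurePreserving c).lintegral_comp hInd]
  congr 1
  funext x
  by_cases hx : x ∈ SetA c
  · rw [Set.indicator_of_mem ((rot_mem_iff c x).mpr hx), Set.indicator_of_mem hx, F_rot]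
  · rw [Set.indicator_of_notMem (fun hh => hx ((rot_mem_iff c x).mp hh)),
      Set.indicator_of_notMem hx]

lemma null_tie (c d : Fin (m+1)) (hcd : c ≠ d) :
    volume {x : Fin m → ℝ | pos x c = pos x d} = 0 := by
  by_cases hc : c = 0
  · subst hc
    obtain ⟨j, rfl⟩ := Fin.eq_succ_of_ne_zero (Ne.symm hcd)
    have hs : {x : Fin m → ℝ | pos x 0 = pos x j.succ} = {x : Fin m → ℝ | x j = 0} := by
      ext x; rw [Set.mem_setOf_eq, Set.mem_setOf_eq, pos_zero, pos_succ, eq_comm]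
    rw [hs]; exact null_coord_zero j
  · obtain ⟨i, rfl⟩ := Fin.eq_succ_of_ne_zero hc
    by_cases hd : d = 0
    · subst hd
      have hs : {x : Fin m → ℝ | pos x i.succ = pos x 0} = {x : Fin m → ℝ | x i = 0} := by
        ext x; rw [Set.mem_setOf_eq, Set.mem_setOf_eq, pos_zero, pos_succ]
      rw [hs]; exact null_coord_zero i
    · obtain ⟨j, rfl⟩ := Fin.eq_succ_of_ne_zero hd
      have hij : i ≠ j := fun hh => hcd (by rw [hh])
      have hs : {x : Fin m → ℝ | pos x i.succ = pos x j.succ} = {x : Fin m → ℝ | x i = x j} := by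
        ext x; rw [Set.mem_setOf_eq, Set.mem_setOf_eq, pos_succ, pos_succ]
      rw [hs]; exact null_eq_coord hij

lemma univ_ae_union : (Set.univ : Set (Fin m → ℝ)) =ᵐ[volume] ⋃ c, SetA c := by
  rw [ae_eq_set]
  refine ⟨?_, by simp⟩
  have hnull : volume (⋃ (c : Fin (m+1)) (d : Fin (m+1)) (_ : c ≠ d),
      {x : Fin m → ℝ | pos x c = pos x d}) = 0 :=
    measure_iUnion_null fun c => measure_iUnion_null fun d =>
      measure_iUnion_null fun hcd => null_tie c d hcd
  refine measure_mono_null ?_ hnull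
  intro x hx
  have hx' : x ∉ ⋃ c, SetA c := hx.2
  obtain ⟨c, -, hc⟩ := Finset.exists_max_image Finset.univ (fun t : Fin (m+1) => pos x t)
    ⟨0, Finset.mem_univ 0⟩
  have hxc : x ∉ SetA c := fun hh => hx' (Set.mem_iUnion.mpr ⟨c, hh⟩)
  rw [SetA, Set.mem_setOf_eq] at hxc
  push_neg at hxc
  obtain ⟨t, ht, hle⟩ := hxc
  refine Set.mem_iUnion.mpr ⟨t, Set.mem_iUnion.mpr ⟨c, Set.mem_iUnion.mpr ⟨ht, ?_⟩⟩⟩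
  exact le_antisymm (hc t (Finset.mem_univ t)) hle

lemma pairwise_disjoint_SetA :
    Set.PairwiseDisjoint (↑(Finset.univ : Finset (Fin (m+1)))) (SetA (m := m)) := by
  intro c _ d _ hcd
  rw [Function.onFun, Set.disjoint_left]
  intro x hxc hxd
  exact lt_asymm (hxc d (Ne.symm hcd)) (hxd c hcd)

lemma total_eq (hm : Measurable ρ) :
    ∫⁻ x : Fin m → ℝ, Ffun ρ x = (m+1 : ℕ) * ∫⁻ x in SetA (m := m) 0, Ffun ρ x := by
  rw [← setLIntegral_univ, setLIntegral_congr univ_ae_union]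
  have hU : (⋃ c, SetA (m := m) c) = ⋃ c ∈ (Finset.univ : Finset (Fin (m+1))), SetA c := by
    simp
  rw [hU, lintegral_biUnion_finset pairwise_disjoint_SetA
    (fun c _ => measurable_SetA c) (Ffun ρ)]
  rw [Finset.sum_congr rfl fun c _ => lintegral_SetA_eq hm c, Finset.sum_const,
    Finset.card_univ, Fintype.card_fin, nsmul_eq_mul]

lemma neg_set_ae : {x : Fin m → ℝ | ∀ i, x i ≤ 0} =ᵐ[volume] SetA (m := m) 0 := by
  rw [ae_eq_set]
  constructor
  · have hnull : volume (⋃ i : Fin m, {x : Fin m → ℝ | x i = 0}) = 0 :=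
      measure_iUnion_null fun i => null_coord_zero i
    refine measure_mono_null ?_ hnull
    intro x hx
    obtain ⟨hx1, hx2⟩ := hx
    rw [Set.mem_setOf_eq] at hx1
    rw [SetA, Set.mem_setOf_eq] at hx2
    push_neg at hx2
    obtain ⟨t, ht, hle⟩ := hx2
    rw [pos_zero] at hle
    obtain ⟨j, rfl⟩ := Fin.eq_succ_of_ne_zero ht
    rw [pos_succ] at hle
    exact Set.mem_iUnion.mpr ⟨j, le_antisymm (hx1 j) hle⟩
  · have hs : SetA (m := m) 0 \ {x : Fin m → ℝ | ∀ i, x i ≤ 0} = ∅ := by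
      rw [Set.diff_eq_empty]
      intro x hx i
      have h2 := hx i.succ (Fin.succ_ne_zero i)
      rw [pos_zero, pos_succ] at h2
      linarith
    rw [hs]; exact measure_empty

lemma cyclic_main (hm : Measurable ρ) :
    ∫⁻ x in {x : Fin m → ℝ | ∀ i, x i ≤ 0}, Ffun ρ x
      = (∫⁻ x : Fin m → ℝ, Ffun ρ x) / (m+1 : ℕ) := by
  rw [setLIntegral_congr neg_set_ae, total_eq hm,
    ENNReal.eq_div_iff (by exact_mod_cast Nat.succ_ne_zero m) (ENNReal.natCast_ne_top (m+1))]

end Cyclic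


/-- cyclic symmetry: for a random walk with continuous symmetric step
density `ρ`, the density at 0 of `S_n` on the event `{τ_{0+} = n}` (walk staying
nonpositive at steps `1,…,n−1` and returning to 0 at step `n`) equals `ρ^{*n}(0)/n`:
`∫_{(-∞,0]^{n-1}} ρ(x_1) ρ(x_2−x_1) ⋯ ρ(−x_{n-1}) dx = (1/n) ρ^{*n}(0)`. -/
theorem cyclic_symmetry_return_density
    (ρ : ℝ → ℝ) (hρpos : ∀ x, 0 ≤ ρ x) (hρint : ∫ x, ρ x = 1)
    (hρcont : Continuous ρ) (hρsymm : ∀ x, ρ (-x) = ρ x)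
    (n : ℕ) (hn : 1 ≤ n) :
    ∫ x in {x : Fin (n-1) → ℝ | ∀ i, x i ≤ 0},
        ∏ i ∈ Finset.range n, ρ (ext x (i+1) - ext x i)
      = convN ρ (n-1) 0 / n := by
  have hm : Measurable ρ := hρcont.measurable
  obtain ⟨m, rfl⟩ : ∃ m, n = m + 1 := ⟨n - 1, by omega⟩
  show (∫ x in {x : Fin m → ℝ | ∀ i, x i ≤ 0},
      ∏ i ∈ Finset.range (m+1), ρ (ext x (i+1) - ext x i))
    = convN ρ m 0 / ((m+1 : ℕ) : ℝ)
  -- rewrite LHS as toReal of a lower integral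
  have hmeasf : Measurable fun x : Fin m → ℝ =>
      ∏ i ∈ Finset.range (m+1), ρ (ext x (i+1) - ext x i) :=
    Finset.measurable_prod _ fun i _ =>
      hm.comp ((measurable_ext m (i+1)).sub (measurable_ext m i))
  rw [integral_eq_lintegral_of_nonneg_ae
    (Filter.Eventually.of_forall fun x => Finset.prod_nonneg fun i _ => hρpos _)
    hmeasf.aestronglyMeasurable]
  have hofReal : ∀ x : Fin m → ℝ,
      ENNReal.ofReal (∏ i ∈ Finset.range (m+1), ρ (ext x (i+1) - ext x i)) = Ffun ρ x := by
    intro x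
    rw [ENNReal.ofReal_prod_of_nonneg fun i _ => hρpos _]
    exact F_eq_range x
  simp_rw [hofReal]
  rw [cyclic_main hm]
  -- identify the total integral with the convolution
  have hL : ∫⁻ x : Fin m → ℝ, Ffun ρ x = lconv ρ m 0 := by
    rw [← bridge hm m 0]
    apply lintegral_congr
    intro x
    rw [← F_eq_range, Finset.prod_range_succ]
    congr 1
    show ENNReal.ofReal (ρ (ext x (m+1) - ext x m)) = _
    rw [ext_of_gt x (by omega : m < m+1)]
  rw [hL, convN_eq_toReal_lconv hm hρpos hρint m 0, ENNReal.toReal_div]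
  congr 1
end

section
/- For λ ∈ (0,1], (1/(2π)) ∫_ℝ log(1 − λ sech(kπ/2)) dk = 1/4 − (4/π²)(arccos(√((1−λ)/2)))². -/
open MeasureTheory Real Set Filter Metric Topology

private lemma sech_pos (k : ℝ) : 0 < (Real.cosh (k * π / 2))⁻¹ :=
  inv_pos.2 (Real.cosh_pos _)

private lemma sech_le_one (k : ℝ) : (Real.cosh (k * π / 2))⁻¹ ≤ 1 :=
  inv_le_one_of_one_le₀ (Real.one_le_cosh _)

private lemma integrable_of_even_aux {f : ℝ → ℝ}
    (hm : AEStronglyMeasurable f (volume : Measure ℝ))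
    (he : ∀ x, f (-x) = f x) (h : IntegrableOn f (Ici 0)) : Integrable f := by
  rw [← integrableOn_univ, ← @Iio_union_Ici _ _ (0 : ℝ), integrableOn_union]
  refine ⟨?_, h⟩
  rw [← (Measure.measurePreserving_neg (volume : Measure ℝ)).integrableOn_comp_preimage
      (Homeomorph.neg ℝ).measurableEmbedding]
  have : (fun x : ℝ => f (-x)) = f := funext he
  simp only [Function.comp_def, this, neg_preimage, neg_Iio]
  exact h.mono_set (by rw [neg_zero]; exact Ioi_subset_Ici le_rfl)

/-- cosh x ≥ exp |x| / 2 -/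
private lemma cosh_ge (x : ℝ) : Real.exp |x| / 2 ≤ Real.cosh x := by
  rcases abs_cases x with ⟨h, _⟩ | ⟨h, _⟩ <;> rw [h, Real.cosh_eq] <;>
    nlinarith [Real.exp_pos x, Real.exp_pos (-x)]

private lemma sech_le_exp (k : ℝ) : (Real.cosh (k * π / 2))⁻¹ ≤ 2 * Real.exp (-(π/2) * |k|) := by
  have h1 : Real.exp (|k| * π / 2) / 2 ≤ Real.cosh (k * π / 2) := by
    have := cosh_ge (k * π / 2)
    rwa [abs_div, abs_mul, abs_of_pos Real.pi_pos, abs_of_pos (by norm_num : (0:ℝ) < 2)] at this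
  have h2 : (0:ℝ) < Real.exp (|k| * π / 2) / 2 := by positivity
  calc (Real.cosh (k * π / 2))⁻¹ ≤ (Real.exp (|k| * π / 2) / 2)⁻¹ := inv_anti₀ h2 h1
    _ = 2 * Real.exp (-(π/2) * |k|) := by
        rw [inv_div, div_eq_mul_inv, ← Real.exp_neg]; ring_nf

private lemma integrable_sech : Integrable (fun k : ℝ => (Real.cosh (k * π / 2))⁻¹) := by
  apply integrable_of_even_aux
  · exact (Real.continuous_cosh.comp (by continuity)).inv₀
      (fun k => (Real.cosh_pos _).ne') |>.aestronglyMeasurable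
  · intro x; simp [neg_mul, neg_div, Real.cosh_neg]
  · rw [integrableOn_Ici_iff_integrableOn_Ioi]
    apply Integrable.mono' ((exp_neg_integrableOn_Ioi 0 (by positivity : (0:ℝ) < π/2)).const_mul 2)
    · exact ((Real.continuous_cosh.comp (by continuity)).inv₀
        (fun k => (Real.cosh_pos _).ne')).aestronglyMeasurable.restrict
    · filter_upwards [ae_restrict_mem measurableSet_Ioi] with k hk
      rw [Real.norm_eq_abs, abs_of_pos (sech_pos k)]
      have := sech_le_exp k
      rw [abs_of_pos (mem_Ioi.1 hk)] at this
      linarith [this]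

-- core log inequalities
private lemma neg_log_le_rpow {x : ℝ} (hx : 0 < x) : -Real.log x ≤ 4 / x ^ ((1:ℝ)/4) := by
  have h4 : (0:ℝ) < x ^ ((1:ℝ)/4) := Real.rpow_pos_of_pos hx _
  have := Real.log_le_sub_one_of_pos (inv_pos.2 h4)
  rw [Real.log_inv, Real.log_rpow hx] at this
  rw [div_eq_mul_inv]
  linarith [inv_pos.2 h4]

private lemma neg_log_le_linear {z : ℝ} (hz : 0 < z) : -Real.log z ≤ (1 - z)/z := by
  have := Real.log_le_sub_one_of_pos (inv_pos.2 hz)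
  rw [Real.log_inv] at this
  have : -Real.log z ≤ z⁻¹ - 1 := this
  have hinv : z⁻¹ = 1/z := (one_div _).symm
  rw [hinv] at this
  calc -Real.log z ≤ 1/z - 1 := this
    _ = (1-z)/z := by field_simp

private lemma sq_le_sq_sinh (y : ℝ) : y^2 ≤ Real.sinh y ^2 := by
  rcases le_or_gt 0 y with h | h
  · rcases eq_or_lt_of_le h with rfl | h'
    · simp
    · nlinarith [(Real.self_lt_sinh_iff).2 h']
  · have h' : 0 < -y := by linarith
    have := (Real.self_lt_sinh_iff).2 h'
    rw [Real.sinh_neg] at this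
    nlinarith

private lemma cosh_sub_one (t : ℝ) : t^2/2 ≤ Real.cosh t - 1 := by
  have h1 : Real.cosh t = 2 * Real.sinh (t/2)^2 + 1 := by
    have := Real.cosh_two_mul (t/2)
    have h2 := Real.cosh_sq (t/2)
    rw [show 2 * (t/2) = t by ring] at this
    rw [this, h2]; ring
  nlinarith [sq_le_sq_sinh (t/2)]

private lemma cosh_le_nine {t : ℝ} (ht : |t| ≤ 2) : Real.cosh t ≤ 9 := by
  have h1 : Real.cosh t = Real.cosh |t| := (Real.cosh_abs t).symm
  have h2 : Real.cosh |t| ≤ Real.cosh 2 := Real.cosh_le_cosh.2 (by rwa [abs_abs, abs_two])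
  have h3 : Real.cosh 2 ≤ Real.exp 2 := by
    rw [Real.cosh_eq]
    have e1 : Real.exp (-2:ℝ) ≤ 1 := Real.exp_le_one_iff.mpr (by norm_num)
    have e2 : (1:ℝ) ≤ Real.exp 2 := Real.one_le_exp (by norm_num)
    linarith
  have h4 : Real.exp 2 ≤ 9 := by
    have := Real.exp_one_lt_d9
    calc Real.exp 2 = Real.exp 1 ^ 2 := by rw [← Real.exp_nat_mul]; norm_num
      _ ≤ 2.7182818286^2 := by nlinarith [Real.exp_pos 1]
      _ ≤ 9 := by norm_num
  linarith

private lemma one_sub_sech_ge {k : ℝ} (hk : |k| ≤ 1) :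
    k^2/8 ≤ 1 - (Real.cosh (k * π / 2))⁻¹ := by
  set t := k * π / 2 with ht
  have hpi : (3:ℝ) < π := Real.pi_gt_three
  have hpi4 : π ≤ 4 := Real.pi_le_four
  have habs : |t| ≤ 2 := by
    rw [ht, abs_div, abs_mul, abs_of_pos Real.pi_pos]
    rw [abs_two]
    calc |k| * π / 2 ≤ 1 * 4 / 2 := by
          apply div_le_div_of_nonneg_right ?_ (by norm_num)
          exact mul_le_mul hk hpi4 (by positivity) (by norm_num)
      _ = 2 := by norm_num
  have h1 : 1 + t^2/2 ≤ Real.cosh t := by nlinarith [cosh_sub_one t]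
  have h2 : Real.cosh t ≤ 9 := cosh_le_nine habs
  have h3 : (0:ℝ) < Real.cosh t := Real.cosh_pos t
  have ht2 : 9 * k^2/4 ≤ t^2 := by
    have h : t^2 = k^2 * π^2/4 := by rw [ht]; ring
    nlinarith [mul_nonneg (sq_nonneg k) (by nlinarith : (0:ℝ) ≤ π^2 - 9)]
  rw [le_sub_comm]
  rw [inv_le_iff_one_le_mul₀ h3]
  nlinarith [sq_nonneg k]

private lemma ae_ne_zero : ∀ᵐ (k : ℝ), k ≠ 0 := by
  refine ae_iff.mpr ?_
  simp only [ne_eq, not_not]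
  have : {a : ℝ | a = 0} = {(0:ℝ)} := by ext x; simp
  rw [this]
  exact measure_singleton 0

private lemma g_nonneg (k : ℝ) : 0 ≤ -Real.log (1 - (Real.cosh (k * π / 2))⁻¹) := by
  have h1 : (0:ℝ) ≤ 1 - (Real.cosh (k * π / 2))⁻¹ := by linarith [sech_le_one k]
  have h2 : 1 - (Real.cosh (k * π / 2))⁻¹ ≤ 1 := by linarith [sech_pos k]
  have h := Real.log_nonpos h1 h2
  linarith

private lemma g_meas : AEStronglyMeasurable
    (fun k : ℝ => -Real.log (1 - (Real.cosh (k * π / 2))⁻¹)) volume := by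
  apply Measurable.aestronglyMeasurable
  exact (Real.measurable_log.comp
    (measurable_const.sub ((Real.continuous_cosh.comp (by continuity)).measurable.inv))).neg

private lemma g_near {k : ℝ} (hk0 : k ≠ 0) (hk : |k| ≤ 1) :
    -Real.log (1 - (Real.cosh (k * π / 2))⁻¹) ≤ 8 * |k| ^ (-(2⁻¹) : ℝ) := by
  have habs : 0 < |k| := abs_pos.2 hk0
  have h8 : (0:ℝ) < k^2/8 := by positivity
  have hle := one_sub_sech_ge hk
  have hx : 0 < 1 - (Real.cosh (k * π / 2))⁻¹ := lt_of_lt_of_le h8 hle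
  have key : |k| ^ ((2:ℝ)⁻¹) / 2 ≤ (k^2/8) ^ ((1:ℝ)/4) := by
    have ha : (0:ℝ) ≤ |k| ^ ((2:ℝ)⁻¹) / 2 := by positivity
    have hb : (0:ℝ) ≤ (k^2/8) ^ ((1:ℝ)/4) := by positivity
    apply le_of_pow_le_pow_left₀ (n := 4) (by norm_num) hb
    have e1 : (|k| ^ ((2:ℝ)⁻¹) / 2)^(4:ℕ) = k^2/16 := by
      have h24 : ((2:ℝ)⁻¹) * ((4:ℕ):ℝ) = 2 := by norm_num
      rw [div_pow, ← Real.rpow_natCast (|k| ^ ((2:ℝ)⁻¹)) 4, ← Real.rpow_mul (abs_nonneg k),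
        h24, Real.rpow_two, sq_abs]
      norm_num
    have e2 : ((k^2/8) ^ ((1:ℝ)/4))^(4:ℕ) = k^2/8 := by
      have h14 : ((1:ℝ)/4) * ((4:ℕ):ℝ) = 1 := by norm_num
      rw [← Real.rpow_natCast ((k^2/8) ^ ((1:ℝ)/4)) 4, ← Real.rpow_mul h8.le, h14,
        Real.rpow_one]
    rw [e1, e2]
    nlinarith [sq_nonneg k]
  have hbpos : (0:ℝ) < (k^2/8) ^ ((1:ℝ)/4) := Real.rpow_pos_of_pos h8 _
  calc -Real.log (1 - (Real.cosh (k * π / 2))⁻¹)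
      ≤ 4 / (1 - (Real.cosh (k * π / 2))⁻¹) ^ ((1:ℝ)/4) := neg_log_le_rpow hx
    _ ≤ 4 / (k^2/8) ^ ((1:ℝ)/4) := by
        gcongr

    _ ≤ 4 / (|k| ^ ((2:ℝ)⁻¹) / 2) := by
        gcongr
    _ = 8 * (|k| ^ ((2:ℝ)⁻¹))⁻¹ := by
        rw [div_div_eq_mul_div, div_eq_mul_inv]; ring
    _ = 8 * |k| ^ (-(2⁻¹) : ℝ) := by rw [← Real.rpow_neg (abs_nonneg k)]

private lemma g_tail {k : ℝ} (hk : 1 ≤ |k|) :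
    -Real.log (1 - (Real.cosh (k * π / 2))⁻¹) ≤ 4 * Real.exp (-(π/2) * |k|) := by
  set s := (Real.cosh (k * π / 2))⁻¹ with hs
  have hs0 : 0 < s := sech_pos k
  have hcosh : Real.cosh (π/2) ≤ Real.cosh (k * π / 2) := by
    apply Real.cosh_le_cosh.2
    have h2 : |k * π / 2| = |k| * (π/2) := by
      rw [abs_div, abs_mul, abs_of_pos Real.pi_pos, abs_two]; ring
    have h3 : |π/2| = π/2 := abs_of_pos (by positivity)
    rw [h2, h3]
    nlinarith [Real.pi_pos]
  have h178 : (17:ℝ)/8 ≤ Real.cosh (π/2) := by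
    have h := cosh_sub_one (π/2)
    nlinarith [Real.pi_gt_three]
  have hs_le : s ≤ 8/17 := by
    rw [hs]
    calc (Real.cosh (k * π / 2))⁻¹ ≤ (Real.cosh (π/2))⁻¹ := inv_anti₀ (Real.cosh_pos _) hcosh
      _ ≤ ((17:ℝ)/8)⁻¹ := inv_anti₀ (by norm_num) h178
      _ = 8/17 := by norm_num
  have hz : (1:ℝ)/2 ≤ 1 - s := by linarith
  have hzpos : (0:ℝ) < 1 - s := by linarith
  have hexp := sech_le_exp k
  calc -Real.log (1-s) ≤ (1-(1-s))/(1-s) := neg_log_le_linear hzpos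
    _ = s/(1-s) := by ring_nf
    _ ≤ s/(1/2) := by gcongr
    _ = 2*s := by ring
    _ ≤ 2*(2*Real.exp (-(π/2)*|k|)) := by rw [hs]; linarith [hexp]
    _ = 4*Real.exp (-(π/2)*|k|) := by ring

private lemma integrable_g :
    Integrable (fun k : ℝ => -Real.log (1 - (Real.cosh (k * π / 2))⁻¹)) := by
  apply integrable_of_even_aux g_meas
  · intro x; simp [neg_mul, neg_div, Real.cosh_neg]
  · rw [← Icc_union_Ioi_eq_Ici (zero_le_one (α := ℝ)), integrableOn_union]
    constructor
    · have hbi : IntegrableOn (fun k : ℝ => 8 * k ^ (-(2⁻¹) : ℝ)) (Icc (0:ℝ) 1) := by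
        rw [integrableOn_Icc_iff_integrableOn_Ioc]
        exact ((intervalIntegrable_iff_integrableOn_Ioc_of_le zero_le_one).1
          (intervalIntegral.intervalIntegrable_rpow' (by norm_num))).const_mul 8
      apply hbi.mono' g_meas.restrict
      filter_upwards [ae_restrict_mem measurableSet_Icc, ae_restrict_of_ae ae_ne_zero]
        with k hk hk0
      rw [Real.norm_eq_abs, abs_of_nonneg (g_nonneg k)]
      have := g_near hk0 (by rw [abs_of_nonneg hk.1]; exact hk.2)
      rwa [abs_of_nonneg hk.1] at this
    · apply Integrable.mono' ((exp_neg_integrableOn_Ioi 1 (by positivity : (0:ℝ) < π/2)).const_mul 4)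
        g_meas.restrict
      filter_upwards [ae_restrict_mem measurableSet_Ioi] with k hk
      rw [Real.norm_eq_abs, abs_of_nonneg (g_nonneg k)]
      have h1 : (1:ℝ) ≤ |k| := by rw [abs_of_pos (by linarith [mem_Ioi.1 hk])]; linarith [mem_Ioi.1 hk]
      have := g_tail h1
      rw [abs_of_pos (by linarith [mem_Ioi.1 hk])] at this
      exact this

private lemma sech_lt_one {k : ℝ} (hk : k ≠ 0) : (Real.cosh (k * π / 2))⁻¹ < 1 := by
  have h : (1:ℝ) < Real.cosh (k * π / 2) := by
    rw [Real.one_lt_cosh]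
    exact div_ne_zero (mul_ne_zero hk Real.pi_ne_zero) two_ne_zero
  exact inv_lt_one_of_one_lt₀ h

private lemma one_sub_pos {l k : ℝ} (hl0 : 0 ≤ l) (hl1 : l ≤ 1) (hk : k ≠ 0) :
    0 < 1 - l * (1 / Real.cosh (k * π / 2)) := by
  rw [one_div]
  have h1 : l * (Real.cosh (k * π / 2))⁻¹ ≤ (Real.cosh (k * π / 2))⁻¹ := by
    nlinarith [sech_pos k]
  linarith [sech_lt_one hk]

private lemma integrand_bound {l : ℝ} (hl0 : 0 ≤ l) (hl1 : l ≤ 1) {k : ℝ} (hk : k ≠ 0) :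
    ‖Real.log (1 - l * (1 / Real.cosh (k * π / 2)))‖
      ≤ -Real.log (1 - (Real.cosh (k * π / 2))⁻¹) := by
  have hs0 := sech_pos k
  have hs1 := sech_lt_one hk
  have h1 := one_sub_pos hl0 hl1 hk
  have h3 : 1 - (Real.cosh (k * π / 2))⁻¹ ≤ 1 - l * (1 / Real.cosh (k * π / 2)) := by
    rw [one_div]; nlinarith
  have h2 : 1 - l * (1 / Real.cosh (k * π / 2)) ≤ 1 := by
    rw [one_div]; nlinarith
  have hle := Real.log_nonpos (by linarith) h2
  rw [Real.norm_eq_abs, abs_of_nonpos hle]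
  have := Real.log_le_log (by linarith : (0:ℝ) < 1 - (Real.cosh (k * π / 2))⁻¹) h3
  linarith

private lemma integrand_meas (l : ℝ) : AEStronglyMeasurable
    (fun k : ℝ => Real.log (1 - l * (1 / Real.cosh (k * π / 2)))) volume := by
  apply Measurable.aestronglyMeasurable
  apply Real.measurable_log.comp
  apply measurable_const.sub
  apply Measurable.const_mul
  exact measurable_const.div (Real.continuous_cosh.comp (by continuity)).measurable

private lemma F_integrable {l : ℝ} (hl0 : 0 ≤ l) (hl1 : l ≤ 1) :
    Integrable (fun k : ℝ => Real.log (1 - l * (1 / Real.cosh (k * π / 2)))) := by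
  apply integrable_g.mono' (integrand_meas l)
  filter_upwards [ae_ne_zero] with k hk
  exact integrand_bound hl0 hl1 hk

private lemma F_contOn : ContinuousOn
    (fun l : ℝ => ∫ k : ℝ, Real.log (1 - l * (1 / Real.cosh (k * π / 2)))) (Icc 0 1) := by
  apply continuousOn_of_dominated (fun l _ => integrand_meas l)
    ?_ integrable_g ?_
  · intro l hl
    filter_upwards [ae_ne_zero] with k hk
    exact integrand_bound hl.1 hl.2 hk
  filter_upwards [ae_ne_zero] with k hk
  apply ContinuousOn.log
  · fun_prop
  · intro l hl
    exact (one_sub_pos hl.1 hl.2 hk).ne'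

private lemma integrable_inv_cosh_sub {l : ℝ} (hl0 : 0 ≤ l) (hl1 : l < 1) :
    Integrable (fun k : ℝ => (Real.cosh (k * π / 2) - l)⁻¹) := by
  apply (integrable_sech.const_mul (1-l)⁻¹).mono'
  · apply Measurable.aestronglyMeasurable
    apply Measurable.inv
    exact ((Real.continuous_cosh.comp (by continuity)).measurable.sub measurable_const)
  · refine Eventually.of_forall (fun k => ?_)
    have hc := Real.one_le_cosh (k * π / 2)
    have h1 : 0 < (1-l) * Real.cosh (k * π / 2) := by nlinarith
    have h2 : (1-l) * Real.cosh (k * π / 2) ≤ Real.cosh (k * π / 2) - l := by nlinarith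
    have h3 : 0 < Real.cosh (k * π / 2) - l := lt_of_lt_of_le h1 h2
    rw [Real.norm_eq_abs, abs_of_pos (inv_pos.2 h3)]
    calc (Real.cosh (k * π / 2) - l)⁻¹ ≤ ((1-l) * Real.cosh (k * π / 2))⁻¹ := inv_anti₀ h1 h2
      _ = (1-l)⁻¹ * (Real.cosh (k * π / 2))⁻¹ := by rw [mul_inv]

private lemma two_arccos {l : ℝ} (hl0 : 0 ≤ l) (hl1 : l < 1) :
    π/2 + Real.arctan (l / Real.sqrt (1 - l^2)) = 2 * Real.arccos (Real.sqrt ((1-l)/2)) := by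
  set r := Real.sqrt (1 - l^2) with hrdef
  have hr : 0 < r := Real.sqrt_pos.2 (by nlinarith)
  have hr2 : r^2 = 1 - l^2 := Real.sq_sqrt (by nlinarith)
  set u := Real.sqrt ((1-l)/2) with hudef
  have hu2 : u^2 = (1-l)/2 := Real.sq_sqrt (by linarith)
  have hu0 : 0 ≤ u := Real.sqrt_nonneg _
  have hu1 : u ≤ 1 := by nlinarith
  have harc0 : 0 ≤ Real.arctan (l/r) := by
    rw [← Real.arctan_zero]
    exact Real.arctan_strictMono.monotone (by positivity)
  have harc2 : Real.arctan (l/r) < π/2 := Real.arctan_lt_pi_div_two _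
  apply Real.injOn_cos
  · constructor
    · linarith [Real.pi_pos]
    · linarith
  · have h1 := Real.arccos_nonneg u
    have h2 := Real.arccos_le_pi_div_two.2 hu0
    constructor
    · linarith
    · linarith
  · -- cos equality
    have hsin : Real.sin (Real.arctan (l/r)) = l := by
      rw [Real.sin_arctan]
      have h1 : 1 + (l/r)^2 = (1/r)^2 := by
        field_simp
        linarith [hr2]
      rw [h1, Real.sqrt_sq (by positivity : (0:ℝ) ≤ 1/r)]
      field_simp
    rw [Real.cos_add, Real.cos_pi_div_two, Real.sin_pi_div_two, Real.cos_two_mul,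
      Real.cos_arccos (by linarith) hu1, hsin, hu2]
    ring

private lemma closed_form {l : ℝ} (hl0 : 0 ≤ l) (hl1 : l < 1) :
    ∫ k : ℝ, (Real.cosh (k * π / 2) - l)⁻¹
      = (8 / (π * Real.sqrt (1 - l^2))) * Real.arccos (Real.sqrt ((1-l)/2)) := by
  set r := Real.sqrt (1 - l^2) with hrdef
  have hr : 0 < r := Real.sqrt_pos.2 (by nlinarith)
  have hr2 : r^2 = 1 - l^2 := Real.sq_sqrt (by nlinarith)
  set H : ℝ → ℝ := fun k => (4/(π*r)) * Real.arctan ((Real.exp (k*π/2) - l)/r) with hHdef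
  have hderiv : ∀ k, HasDerivAt H ((Real.cosh (k*π/2) - l)⁻¹) k := by
    intro k
    set E := Real.exp (k*π/2) with hEdef
    have hE : 0 < E := Real.exp_pos _
    have h1 : HasDerivAt (fun k : ℝ => k*π/2) (π/2) k := by
      have := ((hasDerivAt_id k).const_mul π).div_const 2
      simpa [mul_comm] using this
    have h2 : HasDerivAt (fun k : ℝ => Real.exp (k*π/2)) (E * (π/2)) k := h1.exp
    have h3 : HasDerivAt (fun k : ℝ => (Real.exp (k*π/2) - l)/r) (E * (π/2)/r) k :=
      (h2.sub_const l).div_const r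
    have h4 := (h3.arctan).const_mul (4/(π*r))
    refine h4.congr_deriv (Eq.symm ?_)
    simp only [← hEdef]
    have hch2 : 2 * E * Real.cosh (k*π/2) = E^2 + 1 := by
      rw [hEdef, Real.cosh_eq, Real.exp_neg]
      have := Real.exp_ne_zero (k*π/2)
      field_simp
    have hcl : 0 < Real.cosh (k*π/2) - l := by linarith [Real.one_le_cosh (k*π/2)]
    have hden : 0 < 1 + ((E - l)/r)^2 := by positivity
    have hpi := Real.pi_ne_zero
    have hsum : 1 + ((E - l)/r)^2 = 2*E*(Real.cosh (k*π/2) - l)/r^2 := by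
      field_simp
      linear_combination hr2 - hch2
    rw [hsum]
    field_simp
    ring
  have hmul : Tendsto (fun k : ℝ => k * π / 2) atTop atTop := by
    apply Tendsto.atTop_div_const (by norm_num : (0:ℝ) < 2)
    exact Tendsto.atTop_mul_const Real.pi_pos tendsto_id
  have hmulb : Tendsto (fun k : ℝ => k * π / 2) atBot atBot := by
    apply Tendsto.atBot_div_const (by norm_num : (0:ℝ) < 2)
    exact Tendsto.atBot_mul_const Real.pi_pos tendsto_id
  have htop : Tendsto H atTop (𝓝 ((4/(π*r)) * (π/2))) := by
    apply Tendsto.const_mul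
    refine (tendsto_nhds_of_tendsto_nhdsWithin Real.tendsto_arctan_atTop).comp ?_
    apply Tendsto.atTop_div_const hr
    apply tendsto_atTop_add_const_right
    exact Real.tendsto_exp_atTop.comp hmul
  have hbot : Tendsto H atBot (𝓝 ((4/(π*r)) * Real.arctan ((0 - l)/r))) := by
    apply Tendsto.const_mul
    refine (Real.continuous_arctan.tendsto _).comp ?_
    exact ((Real.tendsto_exp_atBot.comp hmulb).sub_const l).div_const r
  have hint := integrable_inv_cosh_sub hl0 hl1
  have key := MeasureTheory.integral_of_hasDerivAt_of_tendsto hderiv hint hbot htop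
  rw [key]
  have h2a := two_arccos hl0 hl1
  have : (4/(π*r)) * (π/2) - (4/(π*r)) * Real.arctan ((0 - l)/r)
      = (4/(π*r)) * (π/2 + Real.arctan (l/r)) := by
    rw [zero_sub, neg_div, Real.arctan_neg]; ring
  rw [this, h2a]
  field_simp
  ring

private lemma F_hasDeriv {l : ℝ} (hl0 : 0 ≤ l) (hl1 : l < 1) :
    HasDerivAt (fun x : ℝ => ∫ k : ℝ, Real.log (1 - x * (1 / Real.cosh (k * π / 2))))
      (-((8 / (π * Real.sqrt (1 - l^2))) * Real.arccos (Real.sqrt ((1-l)/2)))) l := by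
  set b := (1+l)/2 with hbdef
  have hb1 : b < 1 := by rw [hbdef]; linarith
  have hε : (0:ℝ) < (1-l)/2 := by linarith
  have key := hasDerivAt_integral_of_dominated_loc_of_deriv_le (μ := volume)
    (F := fun x k => Real.log (1 - x * (1 / Real.cosh (k * π / 2))))
    (F' := fun x k => -(1 / Real.cosh (k * π / 2)) / (1 - x * (1 / Real.cosh (k * π / 2))))
    (x₀ := l) (bound := fun k => (1-b)⁻¹ * (Real.cosh (k * π / 2))⁻¹)
    (ball_mem_nhds l hε) (Eventually.of_forall (fun x => integrand_meas x)) (F_integrable hl0 hl1.le)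
    ?_ ?_ (integrable_sech.const_mul _) ?_
  · obtain ⟨-, hd⟩ := key
    refine hd.congr_deriv (Eq.symm ?_)
    have hptwise : ∀ k : ℝ, -(1 / Real.cosh (k * π / 2)) / (1 - l * (1 / Real.cosh (k * π / 2)))
        = -((Real.cosh (k * π / 2) - l)⁻¹) := by
      intro k
      have hc : 0 < Real.cosh (k * π / 2) := Real.cosh_pos _
      have hcl : 0 < Real.cosh (k * π / 2) - l := by linarith [Real.one_le_cosh (k * π / 2)]
      have hs0 := sech_pos k
      have hs1 := sech_le_one k
      have hp : 0 < 1 - l * (Real.cosh (k * π / 2))⁻¹ := by nlinarith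
      simp only [one_div]
      rw [div_eq_iff hp.ne']
      field_simp
    rw [integral_congr_ae (Eventually.of_forall hptwise), integral_neg,
      closed_form hl0 hl1]
  · -- measurability of F' l
    apply Measurable.aestronglyMeasurable
    have hm : Measurable (fun k : ℝ => 1 / Real.cosh (k * π / 2)) :=
      measurable_const.div (Real.continuous_cosh.comp (by continuity)).measurable
    exact (hm.neg).div (measurable_const.sub (hm.const_mul l))
  · -- bound
    refine Eventually.of_forall (fun k => fun x hx => ?_)
    have hs0 := sech_pos k
    have hs1 := sech_le_one k
    have hxb : x < b := by
      have := mem_ball_iff_norm.1 hx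
      rw [Real.norm_eq_abs, abs_lt] at this
      rw [hbdef]; linarith [this.1, this.2]
    have hxs : x * (Real.cosh (k * π / 2))⁻¹ ≤ b := by
      rcases le_or_gt x 0 with h | h
      · nlinarith
      · nlinarith
    have hpos : 0 < 1 - x * (Real.cosh (k * π / 2))⁻¹ := by linarith
    simp only [one_div]
    rw [Real.norm_eq_abs, abs_div, abs_neg, abs_of_pos hs0, abs_of_pos hpos,
      div_le_iff₀ hpos]
    have h1b : 0 < 1 - b := by linarith
    calc (Real.cosh (k * π / 2))⁻¹ = (1-b)⁻¹ * (Real.cosh (k * π / 2))⁻¹ * (1-b) := by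
          field_simp
      _ ≤ (1-b)⁻¹ * (Real.cosh (k * π / 2))⁻¹ * (1 - x * (Real.cosh (k * π / 2))⁻¹) := by
          have hnn : (0:ℝ) ≤ (1-b)⁻¹ * (Real.cosh (k * π / 2))⁻¹ := by positivity
          apply mul_le_mul_of_nonneg_left _ hnn
          linarith [hxs]
  · -- differentiability in x
    refine Eventually.of_forall (fun k => fun x hx => ?_)
    have hs0 := sech_pos k
    have hs1 := sech_le_one k
    have hxb : x < b := by
      have := mem_ball_iff_norm.1 hx
      rw [Real.norm_eq_abs, abs_lt] at this
      rw [hbdef]; linarith [this.1, this.2]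
    have hxs : x * (1 / Real.cosh (k * π / 2)) ≤ b := by
      rw [one_div]
      rcases le_or_gt x 0 with h | h
      · nlinarith
      · nlinarith
    have hpos : 0 < 1 - x * (1 / Real.cosh (k * π / 2)) := by linarith [hxs]
    have h1 : HasDerivAt (fun x : ℝ => 1 - x * (1 / Real.cosh (k * π / 2)))
        (-(1 / Real.cosh (k * π / 2))) x := by
      simpa using ((hasDerivAt_id x).mul_const (1 / Real.cosh (k * π / 2))).const_sub 1
    exact h1.log hpos.ne'

private lemma sqrt_identity {l : ℝ} (hl0 : 0 ≤ l) (hl1 : l < 1) :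
    Real.sqrt ((1-l)/2) * Real.sqrt (1 - Real.sqrt ((1-l)/2)^2) = Real.sqrt (1 - l^2) / 2 := by
  have hu2 : Real.sqrt ((1-l)/2)^2 = (1-l)/2 := Real.sq_sqrt (by linarith)
  rw [hu2, show (1 - (1-l)/2 : ℝ) = (1+l)/2 by ring,
    ← Real.sqrt_mul (by linarith : (0:ℝ) ≤ (1-l)/2),
    show ((1-l)/2 * ((1+l)/2) : ℝ) = (1-l^2) * (1/2)^2 by ring,
    Real.sqrt_mul (by nlinarith : (0:ℝ) ≤ 1-l^2), Real.sqrt_sq (by norm_num : (0:ℝ) ≤ 1/2)]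
  ring

private lemma G_hasDeriv {l : ℝ} (hl0 : 0 ≤ l) (hl1 : l < 1) :
    HasDerivAt (fun x : ℝ => π/2 - (8/π) * (Real.arccos (Real.sqrt ((1-x)/2)))^2)
      (-((8 / (π * Real.sqrt (1 - l^2))) * Real.arccos (Real.sqrt ((1-l)/2)))) l := by
  set u := Real.sqrt ((1-l)/2) with hu
  have hu2 : u^2 = (1-l)/2 := Real.sq_sqrt (by linarith)
  have hupos : 0 < u := Real.sqrt_pos.2 (by linarith)
  have hu1 : u < 1 := by nlinarith
  have hw : HasDerivAt (fun x : ℝ => (1-x)/2) (-(1/2)) l := by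
    have h := ((hasDerivAt_id l).const_sub 1).div_const 2
    refine h.congr_deriv ?_
    norm_num
  have hsq : HasDerivAt (fun x : ℝ => Real.sqrt ((1-x)/2)) (1/(2*u) * (-(1/2))) l := by
    have h := (Real.hasDerivAt_sqrt (show ((1-l)/2:ℝ) ≠ 0 from ne_of_gt (by linarith))).comp l hw
    exact h
  have harc : HasDerivAt (fun x : ℝ => Real.arccos (Real.sqrt ((1-x)/2)))
      (-(1/Real.sqrt (1 - u^2)) * (1/(2*u) * (-(1/2)))) l := by
    have h := (Real.hasDerivAt_arccos (by linarith : u ≠ -1) (by linarith : u ≠ 1)).comp l hsq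
    exact h
  have hpow := harc.pow 2
  have hfinal := (hpow.const_mul (8/π)).const_sub (π/2)
  refine hfinal.congr_deriv (Eq.symm ?_)
  simp only [← hu]
  have hid : u * Real.sqrt (1 - u^2) = Real.sqrt (1-l^2)/2 := by
    rw [hu]; exact sqrt_identity hl0 hl1
  have hs1u : 0 < Real.sqrt (1 - u^2) := Real.sqrt_pos.2 (by nlinarith)
  rw [show Real.sqrt (1-l^2) = 2*(u*Real.sqrt (1 - u^2)) by rw [hid]; ring]
  have hπ := Real.pi_ne_zero
  norm_num
  field_simp

private lemma FG : ∀ y ∈ Icc (0:ℝ) 1,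
    (∫ k : ℝ, Real.log (1 - y * (1 / Real.cosh (k * π / 2))))
      = π/2 - (8/π) * (Real.arccos (Real.sqrt ((1-y)/2)))^2 := by
  have hG : ContinuousOn (fun x : ℝ => π/2 - (8/π) * (Real.arccos (Real.sqrt ((1-x)/2)))^2)
      (Icc 0 1) := by
    apply Continuous.continuousOn
    have c1 : Continuous fun x : ℝ => Real.arccos (Real.sqrt ((1-x)/2)) :=
      Real.continuous_arccos.comp (Real.continuous_sqrt.comp (by continuity))
    exact continuous_const.sub (continuous_const.mul (c1.pow 2))
  have hzero : (∫ k : ℝ, Real.log (1 - (0:ℝ) * (1 / Real.cosh (k * π / 2))))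
      = π/2 - (8/π) * (Real.arccos (Real.sqrt ((1-(0:ℝ))/2)))^2 := by
    have hf0 : (∫ k : ℝ, Real.log (1 - (0:ℝ) * (1 / Real.cosh (k * π / 2)))) = 0 := by
      simp
    have hsq : Real.sqrt ((1-(0:ℝ))/2) = Real.sqrt 2 / 2 := by
      rw [show ((1:ℝ)-0)/2 = (Real.sqrt 2/2)^2 by
        rw [div_pow, Real.sq_sqrt (by norm_num : (0:ℝ) ≤ 2)]; norm_num]
      exact Real.sqrt_sq (by positivity)
    have harc : Real.arccos (Real.sqrt ((1-(0:ℝ))/2)) = π/4 := by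
      rw [hsq, ← Real.cos_pi_div_four]
      exact Real.arccos_cos (by positivity) (by linarith [Real.pi_pos])
    rw [hf0, harc]
    have hπ := Real.pi_ne_zero
    field_simp
    ring
  exact eq_of_has_deriv_right_eq
    (f' := fun x => -((8 / (π * Real.sqrt (1 - x^2))) * Real.arccos (Real.sqrt ((1-x)/2))))
    (fun x hx => (F_hasDeriv hx.1 hx.2).hasDerivWithinAt)
    (fun x hx => (G_hasDeriv hx.1 hx.2).hasDerivWithinAt)
    F_contOn hG hzero

/-- for `λ ∈ (0,1]`,
`(1/(2π)) ∫_ℝ log(1 − λ sech(kπ/2)) dk = 1/4 − (4/π²)(arccos √((1−λ)/2))²`. -/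
theorem sech_log_integral_at_zero (l : ℝ) (hl : l ∈ Set.Ioc (0:ℝ) 1) :
    (1 / (2 * π)) * ∫ k : ℝ, Real.log (1 - l * (1 / Real.cosh (k * π / 2)))
      = 1/4 - (4 / π^2) * (Real.arccos (Real.sqrt ((1 - l)/2)))^2 := by
  obtain ⟨hl1, hl2⟩ := hl
  rw [FG l ⟨hl1.le, hl2⟩]
  have hπ := Real.pi_ne_zero
  field_simp
  ring
end

section
/- Let ρ(x) = (2/√π) exp(x − e^{2x}) for x ∈ ℝ. Then ρ is a probability density and its symmetric self-correlation ρ̃(z) = ∫_ℝ ρ(w) ρ(w − z) dw equals (1/π) sech(z) for all z ∈ ℝ. -/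
open Real MeasureTheory Set Filter Topology

lemma my_exp_subst (g : ℝ → ℝ) :
    ∫ u in Set.Ioi (0:ℝ), g u = ∫ x : ℝ, Real.exp x * g (Real.exp x) := by
  have h := integral_image_eq_integral_abs_deriv_smul (s := Set.univ) (f := Real.exp)
    (f' := Real.exp) MeasurableSet.univ
    (fun x _ => (Real.hasDerivAt_exp x).hasDerivWithinAt) Real.exp_injective.injOn g
  rw [Set.image_univ, Real.range_exp] at h
  simpa [abs_of_pos (Real.exp_pos _)] using h

lemma my_integral_mul_exp_neg_mul_sq {b : ℝ} (hb : 0 < b) :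
    ∫ r in Set.Ioi (0:ℝ), r * Real.exp (-b * r ^ 2) = (2 * b)⁻¹ := by
  have A : ∀ x : ℝ, HasDerivAt (fun x : ℝ => -(2 * b)⁻¹ * Real.exp (-b * x ^ 2))
      (x * Real.exp (-b * x ^ 2)) x := by
    intro x
    convert (((hasDerivAt_pow 2 x).const_mul (-b)).exp.const_mul (-(2 * b)⁻¹)) using 1
    rotate_left 2
    field_simp
    ring
    all_goals rfl
  have B : Tendsto (fun y : ℝ => -(2 * b)⁻¹ * Real.exp (-b * y ^ 2)) atTop
      (𝓝 (-(2 * b)⁻¹ * 0)) := by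
    refine Tendsto.const_mul _ ?_
    exact Real.tendsto_exp_atBot.comp
      ((tendsto_pow_atTop two_ne_zero).const_mul_atTop_of_neg (neg_lt_zero.2 hb))
  have h := integral_Ioi_of_hasDerivAt_of_tendsto' (a := 0) (fun x _ => A x)
    ((integrable_mul_exp_neg_mul_sq hb).integrableOn (s := Set.Ioi 0)) B
  simpa using h

/-- `ρ(x) = (2/√π) exp(x − e^{2x})` is a probability density and its
symmetric self-correlation `ρ̃(z) = ∫ ρ(w) ρ(w−z) dw` equals `(1/π) sech(z)`. -/
theorem exp_gumbel_density_sech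
    (ρ : ℝ → ℝ)
    (hρ : ∀ x, ρ x = (2 / Real.sqrt π) * Real.exp (x - Real.exp (2*x))) :
    (∀ x, 0 ≤ ρ x) ∧ (∫ x, ρ x = 1) ∧
      (∀ z, ∫ w, ρ w * ρ (w - z) = (1/π) * (1 / Real.cosh z)) := by
  have hπ : (0:ℝ) < π := Real.pi_pos
  have hsπ : (0:ℝ) < Real.sqrt π := Real.sqrt_pos.mpr hπ
  have hsq : Real.sqrt π * Real.sqrt π = π := Real.mul_self_sqrt hπ.le
  have hexp2 : ∀ x : ℝ, Real.exp x ^ 2 = Real.exp (2 * x) := by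
    intro x; rw [sq, ← Real.exp_add]; ring_nf
  refine ⟨fun x => by rw [hρ]; positivity, ?_, ?_⟩
  · -- total mass 1
    have hpt : ∀ x : ℝ, ρ x =
        Real.exp x * ((2 / Real.sqrt π) * Real.exp (-1 * Real.exp x ^ 2)) := by
      intro x
      rw [hρ, hexp2, mul_comm (Real.exp x), mul_assoc, ← Real.exp_add]
      congr 1
      ring
    calc ∫ x, ρ x
        = ∫ x, Real.exp x * ((2 / Real.sqrt π) * Real.exp (-1 * Real.exp x ^ 2)) := by
          exact integral_congr_ae (Filter.Eventually.of_forall hpt)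
      _ = ∫ u in Set.Ioi (0:ℝ), (2 / Real.sqrt π) * Real.exp (-1 * u ^ 2) :=
          (my_exp_subst fun u => (2 / Real.sqrt π) * Real.exp (-1 * u ^ 2)).symm
      _ = (2 / Real.sqrt π) * ∫ u in Set.Ioi (0:ℝ), Real.exp (-1 * u ^ 2) :=
          integral_const_mul _ _
      _ = (2 / Real.sqrt π) * (Real.sqrt (π / 1) / 2) := by rw [integral_gaussian_Ioi 1]
      _ = 1 := by
          rw [div_one]
          field_simp
  · -- convolution
    intro z
    set b : ℝ := 1 + Real.exp (-(2 * z)) with hbdef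
    have hb : 0 < b := by positivity
    have hpt : ∀ w : ℝ, ρ w * ρ (w - z) =
        Real.exp w * ((4 / π) * Real.exp (-z) *
          (Real.exp w * Real.exp (-b * Real.exp w ^ 2))) := by
      intro w
      rw [hρ, hρ, hexp2]
      have hc : (2 / Real.sqrt π) * Real.exp (w - Real.exp (2 * w)) *
          ((2 / Real.sqrt π) * Real.exp (w - z - Real.exp (2 * (w - z)))) =
          (4 / π) * Real.exp ((w - Real.exp (2 * w)) + (w - z - Real.exp (2 * (w - z)))) := by
        rw [Real.exp_add]
        field_simp
        ring
        rw [Real.sq_sqrt hπ.le]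
      rw [hc]
      have h2 : Real.exp w * ((4 / π) * Real.exp (-z) *
          (Real.exp w * Real.exp (-b * Real.exp (2 * w)))) =
          (4 / π) * Real.exp (w + -z + w + -b * Real.exp (2 * w)) := by
        rw [Real.exp_add, Real.exp_add, Real.exp_add]
        ring
      rw [h2, mul_right_inj' (by positivity : (4:ℝ)/π ≠ 0), Real.exp_eq_exp]
      have hsplit : Real.exp (2 * (w - z)) = Real.exp (2 * w) * Real.exp (-(2 * z)) := by
        rw [← Real.exp_add]; ring_nf
      rw [hbdef]
      linear_combination -hsplit
    calc ∫ w, ρ w * ρ (w - z)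
        = ∫ w, Real.exp w * ((4 / π) * Real.exp (-z) *
            (Real.exp w * Real.exp (-b * Real.exp w ^ 2))) :=
          integral_congr_ae (Filter.Eventually.of_forall hpt)
      _ = ∫ u in Set.Ioi (0:ℝ), (4 / π) * Real.exp (-z) * (u * Real.exp (-b * u ^ 2)) :=
          (my_exp_subst fun u => (4 / π) * Real.exp (-z) * (u * Real.exp (-b * u ^ 2))).symm
      _ = (4 / π) * Real.exp (-z) * ∫ u in Set.Ioi (0:ℝ), u * Real.exp (-b * u ^ 2) :=
          integral_const_mul _ _
      _ = (4 / π) * Real.exp (-z) * (2 * b)⁻¹ := by rw [my_integral_mul_exp_neg_mul_sq hb]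
      _ = (1 / π) * (1 / Real.cosh z) := by
          rw [Real.cosh_eq, hbdef]
          have h1 : Real.exp (-z) * Real.exp z = 1 := by
            rw [← Real.exp_add]; simp
          have h2 : Real.exp (-z) * Real.exp (-z) = Real.exp (-(2 * z)) := by
            rw [← Real.exp_add]; ring_nf
          have hz : (0:ℝ) < Real.exp z + Real.exp (-z) := by positivity
          field_simp
          linear_combination (norm := ring_nf) 4 * h1 + 4 * h2
end
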